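/- Let G be a POMDP with absorbing target set T, positive costs, and Supp(λ0) ∈ BeliefWin(G,T). For every k ∈ ℕ, the strategy σ*_k, which plays the allowed-action-restricted finite-horizon optimal strategy σFO_k for the first k steps and thereafter plays σ_Allow, is almost-sure winning for the reachability objective Reach(T). -/

import Mathlib

open Finset Filter
open scoped Classical

set_option linter.unusedSectionVars false

noncomputable section

/-- A finite history of a play: the current state together with the
(reversed) list of past steps; an entry `(a, s')` means: the action `a`
was taken from the state `s'` (leading to the next recorded state). -/
abbrev Hist (S A : Type) := S × List (A × S)

/-- The observation–action sequence of a history. -/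
def obsHist {S A Z : Type} (O : S → Z) (h : Hist S A) : Z × List (A × Z) :=
  (O h.1, h.2.map fun p => (p.1, O p.2))

/-- An observation-based (randomized, history-dependent) strategy. -/
structure Strategy (S A Z : Type) [Fintype A] (O : S → Z) where
  act : Hist S A → A → ℝ
  act_nonneg : ∀ h a, 0 ≤ act h a
  act_sum : ∀ h, ∑ a, act h a = 1
  obsBased : ∀ h h', obsHist O h = obsHist O h' → act h = act h'

/-- A partially observable Markov decision process. -/
structure POMDP (S A Z : Type) [Fintype S] [Fintype A] [Fintype Z] where
  δ : S → A → S → ℝ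
  δ_nonneg : ∀ s a s', 0 ≤ δ s a s'
  δ_sum : ∀ s a, ∑ s', δ s a s' = 1
  obs : S → Z
  init : S → ℝ
  init_nonneg : ∀ s, 0 ≤ init s
  init_sum : ∑ s, init s = 1
  init_obs : ∀ s s', 0 < init s → 0 < init s' → obs s = obs s'

namespace POMDP

variable {S A Z : Type} [Fintype S] [Fintype A] [Fintype Z]

/-- The target set `T` consists of absorbing states. -/
def Absorbing (M : POMDP S A Z) (T : Set S) : Prop :=
  ∀ t ∈ T, ∀ a, M.δ t a t = 1

/-- Probability that after `n` steps the process has followed exactly the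
history `(s, l)` (so `l` has length `n`). -/
def hprobAux (M : POMDP S A Z) (σ : Strategy S A Z M.obs) : ℕ → S → List (A × S) → ℝ
  | 0, s, l => if l = [] then M.init s else 0
  | n+1, s, l =>
    match l with
    | [] => 0
    | (a, s') :: rest => hprobAux M σ n s' rest * σ.act (s', rest) a * M.δ s' a s

def hprob (M : POMDP S A Z) (σ : Strategy S A Z M.obs) (n : ℕ) (h : Hist S A) : ℝ :=
  M.hprobAux σ n h.1 h.2

/-- The state sequence of a history visits the set `T`. -/
def visitsT (T : Set S) (h : Hist S A) : Prop :=
  h.1 ∈ T ∨ ∃ p ∈ h.2, p.2 ∈ T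

/-- Probability of reaching `T` within the first `n` steps. -/
def probReachBy (M : POMDP S A Z) (T : Set S) (σ : Strategy S A Z M.obs) (n : ℕ) : ℝ :=
  ∑' h : Hist S A, if visitsT T h then M.hprob σ n h else 0

/-- Probability of the reachability objective `Reach(T)`. -/
def probReach (M : POMDP S A Z) (T : Set S) (σ : Strategy S A Z M.obs) : ℝ :=
  ⨆ n, M.probReachBy T σ n

/-- The strategy `σ` is almost-sure winning for `Reach(T)`. -/
def AlmostSure (M : POMDP S A Z) (T : Set S) (σ : Strategy S A Z M.obs) : Prop :=
  M.probReach T σ = 1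

/-- Accumulated cost along a history. -/
def totalCostAux (c : S → A → ℝ) : S → List (A × S) → ℝ
  | _, [] => 0
  | _, (a, s') :: rest => totalCostAux c s' rest + c s' a

def totalCostH (c : S → A → ℝ) (h : Hist S A) : ℝ := totalCostAux c h.1 h.2

/-- Expected total cost of the first `n` steps, i.e. `E[Total_{n-1}]`
(in particular `E[Total_k] = expTotalSteps M c σ (k+1)`). -/
def expTotalSteps (M : POMDP S A Z) (c : S → A → ℝ) (σ : Strategy S A Z M.obs) (n : ℕ) : ℝ :=
  ∑' h : Hist S A, M.hprob σ n h * totalCostH c h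

/-- The value `Val(σ) = E[Total]` of a strategy, as the limit (limsup) of the
expected costs of the finite prefixes. -/
def Val (M : POMDP S A Z) (c : S → A → ℝ) (σ : Strategy S A Z M.obs) : EReal :=
  Filter.limsup (fun n => ((M.expTotalSteps c σ n : ℝ) : EReal)) Filter.atTop

/-- `optCost`: the infimum of the values of almost-sure winning strategies. -/
def optCost (M : POMDP S A Z) (T : Set S) (c : S → A → ℝ) : EReal :=
  ⨅ σ : {σ : Strategy S A Z M.obs // M.AlmostSure T σ}, M.Val c σ.1

end POMDP

namespace POMDP

variable {S A Z : Type} [Fintype S] [Fintype A] [Fintype Z]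

/-- Uniform distribution over a finite set of states. -/
def uniformS (U : Finset S) : S → ℝ := fun s => if s ∈ U then ((U.card : ℝ))⁻¹ else 0

lemma uniformS_nonneg (U : Finset S) (s : S) : 0 ≤ uniformS U s := by
  unfold uniformS; split_ifs <;> positivity

lemma uniformS_sum (U : Finset S) (h : U.Nonempty) : ∑ s, uniformS U s = 1 := by
  unfold uniformS
  rw [Finset.sum_ite_mem, Finset.univ_inter, Finset.sum_const, nsmul_eq_mul,
    mul_inv_cancel₀]
  exact_mod_cast Finset.card_ne_zero.mpr h

lemma uniformS_mem {U : Finset S} {s : S} (h : 0 < uniformS U s) : s ∈ U := by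
  by_contra hc; simp [uniformS, hc] at h

/-- The POMDP `M` with the initial distribution replaced by the uniform
distribution over `U`. -/
def reinit (M : POMDP S A Z) (U : Finset S) (hU : U.Nonempty)
    (hobs : ∀ s ∈ U, ∀ s' ∈ U, M.obs s = M.obs s') : POMDP S A Z :=
  { M with
    init := uniformS U
    init_nonneg := uniformS_nonneg U
    init_sum := uniformS_sum U hU
    init_obs := fun s s' hs hs' => hobs s (uniformS_mem hs) s' (uniformS_mem hs') }

/-- The POMDP `M` with the initial distribution replaced by the Dirac
distribution at `s0`. -/
def resetDirac (M : POMDP S A Z) (s0 : S) : POMDP S A Z :=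
  { M with
    init := fun s => if s = s0 then 1 else 0
    init_nonneg := by intro s; split_ifs <;> norm_num
    init_sum := by simp
    init_obs := by
      intro s s' hs hs'
      have h1 : s = s0 := by by_contra hc; simp [hc] at hs
      have h2 : s' = s0 := by by_contra hc; simp [hc] at hs'
      rw [h1, h2] }

/-- The set of almost-sure winning belief-supports: those `U` from which
(with the uniform initial distribution on `U`) some strategy wins
`Reach(T)` almost-surely. -/
def BeliefWin (M : POMDP S A Z) (T : Set S) : Set (Finset S) :=
  {U | ∃ (hU : U.Nonempty) (hobs : ∀ s ∈ U, ∀ s' ∈ U, M.obs s = M.obs s'),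
      ∃ σ : Strategy S A Z M.obs, (M.reinit U hU hobs).AlmostSure T σ}

/-- Belief-support update. -/
def updateF (M : POMDP S A Z) (U : Finset S) (z : Z) (a : A) : Finset S :=
  univ.filter (fun t => M.obs t = z ∧ ∃ s ∈ U, 0 < M.δ s a t)

/-- Allowed actions at a belief-support `U`. -/
def AllowSet (M : POMDP S A Z) (T : Set S) (U : Finset S) : Set A :=
  {a | ∀ z, (M.updateF U z a).Nonempty → M.updateF U z a ∈ M.BeliefWin T}

def allowFin (M : POMDP S A Z) (T : Set S) (U : Finset S) : Finset A :=
  univ.filter (· ∈ M.AllowSet T U)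

/-- The support of the initial distribution, as a belief-support. -/
def suppInitF (M : POMDP S A Z) : Finset S := univ.filter (fun s => 0 < M.init s)

/-- Belief-support after a history, starting from the initial belief-support `U0`. -/
def beliefOfFromAux (M : POMDP S A Z) (U0 : Finset S) : S → List (A × S) → Finset S
  | s, [] => U0.filter (fun t => M.obs t = M.obs s)
  | s, (a, s') :: rest => M.updateF (M.beliefOfFromAux U0 s' rest) (M.obs s) a

def beliefOfFrom (M : POMDP S A Z) (U0 : Finset S) (h : Hist S A) : Finset S :=
  M.beliefOfFromAux U0 h.1 h.2

/-- Belief-support after a history (with the initial belief-support being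
the support of the initial distribution). -/
def beliefOf (M : POMDP S A Z) (h : Hist S A) : Finset S :=
  M.beliefOfFrom M.suppInitF h

lemma beliefOfFromAux_obs (M : POMDP S A Z) (U0 : Finset S) :
    ∀ (l l' : List (A × S)) (s s' : S),
      l.map (fun p => (p.1, M.obs p.2)) = l'.map (fun p => (p.1, M.obs p.2)) →
      M.obs s = M.obs s' →
      M.beliefOfFromAux U0 s l = M.beliefOfFromAux U0 s' l'
  | [], [], s, s', _, hs => by simp [beliefOfFromAux, hs]
  | [], (_ :: _), _, _, hmap, _ => by simp at hmap
  | (_ :: _), [], _, _, hmap, _ => by simp at hmap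
  | ((a, t) :: r), ((a', t') :: r'), s, s', hmap, hs => by
      simp only [List.map_cons, List.cons.injEq, Prod.mk.injEq] at hmap
      obtain ⟨⟨ha, ht⟩, hr⟩ := hmap
      simp only [beliefOfFromAux]
      rw [M.beliefOfFromAux_obs U0 r r' t t' hr ht, hs, ha]

/-- Uniform distribution over a finite set of actions. -/
def uniformA (F : Finset A) : A → ℝ := fun a => if a ∈ F then ((F.card : ℝ))⁻¹ else 0

lemma uniformA_nonneg (F : Finset A) (a : A) : 0 ≤ uniformA F a := by
  unfold uniformA; split_ifs <;> positivity

lemma uniformA_sum (F : Finset A) (h : F.Nonempty) : ∑ a, uniformA F a = 1 := by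
  unfold uniformA
  rw [Finset.sum_ite_mem, Finset.univ_inter, Finset.sum_const, nsmul_eq_mul,
    mul_inv_cancel₀]
  exact_mod_cast Finset.card_ne_zero.mpr h

/-- The action distribution of `σ_Allow` (with initial belief-support `U0`):
uniform over the allowed actions of the current belief-support (with a
uniform fallback where no action is allowed). -/
def actAllowFrom (M : POMDP S A Z) (T : Set S) (U0 : Finset S) (h : Hist S A) : A → ℝ :=
  if (M.allowFin T (M.beliefOfFrom U0 h)).Nonempty
  then uniformA (M.allowFin T (M.beliefOfFrom U0 h))
  else uniformA (univ : Finset A)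

/-- The belief-support based strategy `σ_Allow` (tracking beliefs from `U0`). -/
def stratAllowFrom [Nonempty A] (M : POMDP S A Z) (T : Set S) (U0 : Finset S) :
    Strategy S A Z M.obs where
  act := M.actAllowFrom T U0
  act_nonneg := by
    intro h a; unfold actAllowFrom; split_ifs <;> exact uniformA_nonneg _ _
  act_sum := by
    intro h; unfold actAllowFrom; split_ifs with hne
    · exact uniformA_sum _ hne
    · exact uniformA_sum _ univ_nonempty
  obsBased := by
    intro h h' hobs
    have : M.beliefOfFrom U0 h = M.beliefOfFrom U0 h' := by
      unfold beliefOfFrom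
      exact M.beliefOfFromAux_obs U0 h.2 h'.2 h.1 h'.1
        (congrArg Prod.snd hobs) (congrArg Prod.fst hobs)
    unfold actAllowFrom
    rw [this]

/-- `σ_Allow`. -/
def stratAllow [Nonempty A] (M : POMDP S A Z) (T : Set S) : Strategy S A Z M.obs :=
  M.stratAllowFrom T M.suppInitF

/-- `T_Allow(s, U)`: the expected total cost of `σ_Allow` started in the
state `s` with the initial belief-support `U`. -/
def TAllow [Nonempty A] (M : POMDP S A Z) (T : Set S) (c : S → A → ℝ) (s : S) (U : Finset S) :
    EReal :=
  (M.resetDirac s).Val c (M.stratAllowFrom T U)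

/-- `U_Allow`: the maximal expected total cost of `σ_Allow` over all
almost-sure winning belief-supports `U` and states `s ∈ U`. -/
def UAllow [Nonempty A] (M : POMDP S A Z) (T : Set S) (c : S → A → ℝ) : EReal :=
  ⨆ U ∈ M.BeliefWin T, ⨆ s ∈ U, M.TAllow T c s U

end POMDP

namespace POMDP

variable {S A Z : Type} [Fintype S] [Fintype A] [Fintype Z]

/-- Normalization of a nonnegative function into a distribution. -/
def normalize (f : S → ℝ) : S → ℝ := fun t => f t / ∑ u, f u

/-- Support of an information state. -/
def suppF (b : S → ℝ) : Finset S := univ.filter (fun s => b s ≠ 0)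

/-- The information state (posterior distribution) after a history. -/
def infoOfAux (M : POMDP S A Z) : S → List (A × S) → S → ℝ
  | s, [] => normalize (fun t => if M.obs t = M.obs s then M.init t else 0)
  | s, (a, s') :: rest =>
      normalize (fun t => if M.obs t = M.obs s then ∑ u, M.infoOfAux s' rest u * M.δ u a t else 0)

def infoOf (M : POMDP S A Z) (h : Hist S A) : S → ℝ := M.infoOfAux h.1 h.2

lemma infoOfAux_obs (M : POMDP S A Z) :
    ∀ (l l' : List (A × S)) (s s' : S),
      l.map (fun p => (p.1, M.obs p.2)) = l'.map (fun p => (p.1, M.obs p.2)) →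
      M.obs s = M.obs s' →
      M.infoOfAux s l = M.infoOfAux s' l'
  | [], [], s, s', _, hs => by simp [infoOfAux, hs]
  | [], (_ :: _), _, _, hmap, _ => by simp at hmap
  | (_ :: _), [], _, _, hmap, _ => by simp at hmap
  | ((a, t) :: r), ((a', t') :: r'), s, s', hmap, hs => by
      simp only [List.map_cons, List.cons.injEq, Prod.mk.injEq] at hmap
      obtain ⟨⟨ha, ht⟩, hr⟩ := hmap
      simp only [infoOfAux]
      rw [M.infoOfAux_obs r r' t t' hr ht, hs, ha]

/-- Expected one-step cost `c'(b,a)` at an information state. -/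
def cinfo (c : S → A → ℝ) (b : S → ℝ) (a : A) : ℝ := ∑ s, b s * c s a

/-- Probability of observing `z` after playing `a` at information state `b`. -/
def obsProb (M : POMDP S A Z) (b : S → ℝ) (a : A) (z : Z) : ℝ :=
  ∑ t, if M.obs t = z then ∑ u, b u * M.δ u a t else 0

/-- Bayesian update of the information state `b` under action `a` and
observation `z`. -/
def postInfo (M : POMDP S A Z) (b : S → ℝ) (a : A) (z : Z) : S → ℝ :=
  normalize (fun t => if M.obs t = z then ∑ u, b u * M.δ u a t else 0)

/-- The allowed-action-restricted finite-horizon value iteration `V*_n`. -/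
def Vstar (M : POMDP S A Z) (T : Set S) (c : S → A → ℝ) : ℕ → (S → ℝ) → ℝ
  | 0, _ => 0
  | n+1, b =>
    if h : (M.allowFin T (suppF b)).Nonempty then
      (M.allowFin T (suppF b)).inf' h
        (fun a => cinfo c b a + ∑ z, M.obsProb b a z * M.Vstar T c n (M.postInfo b a z))
    else 0

/-- An allowed action attaining the minimum of the value iteration with
`n` steps remaining at information state `b`. -/
def foAct [Nonempty A] (M : POMDP S A Z) (T : Set S) (c : S → A → ℝ) : ℕ → (S → ℝ) → A
  | 0, _ => Classical.arbitrary A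
  | n+1, b =>
    if h : (M.allowFin T (suppF b)).Nonempty then
      Classical.choose (Finset.exists_mem_eq_inf' h
        (fun a => cinfo c b a + ∑ z, M.obsProb b a z * M.Vstar T c n (M.postInfo b a z)))
    else Classical.arbitrary A

/-- The action distribution of the finite-horizon optimal strategy `σFO_k`. -/
def actFO [Nonempty A] (M : POMDP S A Z) (T : Set S) (c : S → A → ℝ) (k : ℕ) (h : Hist S A) :
    A → ℝ :=
  fun a => if a = M.foAct T c (k - h.2.length) (M.infoOf h) then 1 else 0

lemma length_eq_of_obsHist {h h' : Hist S A} {O : S → Z} (he : obsHist O h = obsHist O h') :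
    h.2.length = h'.2.length := by
  have := congrArg (fun x => (Prod.snd x).length) he
  simpa [obsHist] using this

/-- The (allowed-action-restricted) finite-horizon optimal strategy `σFO_k`. -/
def stratFO [Nonempty A] (M : POMDP S A Z) (T : Set S) (c : S → A → ℝ) (k : ℕ) :
    Strategy S A Z M.obs where
  act := M.actFO T c k
  act_nonneg := by intro h a; unfold actFO; split_ifs <;> norm_num
  act_sum := by intro h; unfold actFO; simp
  obsBased := by
    intro h h' hobs
    have hlen : h.2.length = h'.2.length := length_eq_of_obsHist hobs
    have hinfo : M.infoOf h = M.infoOf h' := by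
      unfold infoOf
      exact M.infoOfAux_obs h.2 h'.2 h.1 h'.1
        (congrArg Prod.snd hobs) (congrArg Prod.fst hobs)
    unfold actFO
    rw [hlen, hinfo]

/-- The strategy `σ*_k`: play `σFO_k` for the first `k` steps, then `σ_Allow`. -/
def stratStar [Nonempty A] (M : POMDP S A Z) (T : Set S) (c : S → A → ℝ) (k : ℕ) :
    Strategy S A Z M.obs where
  act := fun h =>
    if h.2.length < k then M.actFO T c k h else M.actAllowFrom T M.suppInitF h
  act_nonneg := by
    intro h a; split_ifs with hl
    · exact (M.stratFO T c k).act_nonneg h a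
    · exact (M.stratAllowFrom T M.suppInitF).act_nonneg h a
  act_sum := by
    intro h; split_ifs with hl
    · exact (M.stratFO T c k).act_sum h
    · exact (M.stratAllowFrom T M.suppInitF).act_sum h
  obsBased := by
    intro h h' hobs
    have hlen : h.2.length = h'.2.length := length_eq_of_obsHist hobs
    rw [hlen]
    split_ifs with hl
    · exact (M.stratFO T c k).obsBased h h' hobs
    · exact (M.stratAllowFrom T M.suppInitF).obsBased h h' hobs

/-- `α_k`: the probability that `T` is not reached within the first `k`
steps when playing `σ*_k`. -/
def alphaK [Nonempty A] (M : POMDP S A Z) (T : Set S) (c : S → A → ℝ) (k : ℕ) : ℝ :=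
  1 - M.probReachBy T (M.stratStar T c k) k

end POMDP

namespace POMDP

attribute [reducible] resetDirac reinit

variable {S A Z : Type} [Fintype S] [Fintype A] [Fintype Z]

/-- Finset of lists of length `n`. -/
def listsN : ℕ → Finset (List (A × S))
  | 0 => {[]}
  | n+1 => ((univ : Finset (A × S)) ×ˢ listsN n).image (fun p => p.1 :: p.2)

lemma mem_listsN : ∀ (n : ℕ) (l : List (A × S)), l ∈ listsN n ↔ l.length = n
  | 0, l => by cases l <;> simp [listsN]
  | n+1, [] => by simp [listsN]
  | n+1, p :: l => by
      simp [listsN, mem_listsN n l]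

def histN (n : ℕ) : Finset (Hist S A) := (univ : Finset S) ×ˢ listsN n

lemma mem_histN {n : ℕ} {h : Hist S A} : h ∈ histN n ↔ h.2.length = n := by
  cases h; simp [histN, mem_listsN]

lemma sum_histN (n : ℕ) (f : Hist S A → ℝ) :
    ∑ h ∈ histN n, f h = ∑ s : S, ∑ l ∈ listsN n, f (s, l) := by
  rw [histN, Finset.sum_product]

lemma sum_listsN_succ (n : ℕ) (g : List (A × S) → ℝ) :
    ∑ l ∈ listsN (n+1), g l = ∑ p : A × S, ∑ l ∈ listsN n, g (p :: l) := by
  rw [listsN, Finset.sum_image, Finset.sum_product]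
  rintro ⟨a, s⟩ h ⟨a', s'⟩ h' he
  simpa using he

variable (M : POMDP S A Z)

@[simp] lemma hprobAux_zeroN (σ : Strategy S A Z M.obs) (s : S) (l : List (A × S)) :
    M.hprobAux σ 0 s l = if l = [] then M.init s else 0 := rfl

@[simp] lemma hprobAux_nil_succ (σ : Strategy S A Z M.obs) (n : ℕ) (s : S) :
    M.hprobAux σ (n+1) s [] = 0 := rfl

@[simp] lemma hprobAux_cons (σ : Strategy S A Z M.obs) (n : ℕ) (s a s' : _) (rest : List (A × S)) :
    M.hprobAux σ (n+1) s ((a, s') :: rest)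
      = M.hprobAux σ n s' rest * σ.act (s', rest) a * M.δ s' a s := rfl

lemma hprobAux_nonneg (σ : Strategy S A Z M.obs) :
    ∀ (n : ℕ) (s : S) (l : List (A × S)), 0 ≤ M.hprobAux σ n s l
  | 0, s, l => by
      rw [hprobAux_zeroN]; split_ifs
      · exact M.init_nonneg s
      · exact le_rfl
  | n+1, s, [] => le_of_eq rfl
  | n+1, s, (a, s') :: rest => by
      rw [hprobAux_cons]
      exact mul_nonneg (mul_nonneg (hprobAux_nonneg σ n s' rest) (σ.act_nonneg _ a))
        (M.δ_nonneg s' a s)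

lemma hprobAux_eq_zero_of_length_ne (σ : Strategy S A Z M.obs) :
    ∀ (n : ℕ) (s : S) (l : List (A × S)), l.length ≠ n → M.hprobAux σ n s l = 0
  | 0, s, l, h => by
      rw [hprobAux_zeroN, if_neg]; intro he; exact h (by simp [he])
  | n+1, s, [], h => rfl
  | n+1, s, (a, s') :: rest, h => by
      rw [hprobAux_cons, hprobAux_eq_zero_of_length_ne σ n s' rest (by simpa using h),
        zero_mul, zero_mul]

/-- The state at time 0 of a history. -/
def startOf : S → List (A × S) → S
  | s, [] => s
  | _, (_, s') :: rest => startOf s' rest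

@[simp] lemma startOf_nil (s : S) : startOf (A := A) s [] = s := rfl
@[simp] lemma startOf_cons (s : S) (a : A) (s' : S) (rest : List (A × S)) :
    startOf s ((a, s') :: rest) = startOf s' rest := rfl

@[simp] lemma resetDirac_δ (t : S) : (M.resetDirac t).δ = M.δ := rfl
@[simp] lemma resetDirac_obs (t : S) : (M.resetDirac t).obs = M.obs := rfl
@[simp] lemma resetDirac_init (t : S) (s : S) :
    (M.resetDirac t).init s = if s = t then 1 else 0 := rfl

lemma hprobAux_resetDirac_eq_zero (t : S) (σ : Strategy S A Z M.obs) :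
    ∀ (n : ℕ) (s : S) (l : List (A × S)), startOf s l ≠ t →
      (M.resetDirac t).hprobAux σ n s l = 0
  | 0, s, [], h => by
      rw [hprobAux_zeroN, if_pos rfl]; simp only [startOf_nil] at h; simp [resetDirac, h]
  | 0, s, (a, s') :: rest, h => by simp
  | n+1, s, [], h => rfl
  | n+1, s, (a, s') :: rest, h => by
      rw [hprobAux_cons, hprobAux_resetDirac_eq_zero t σ n s' rest (by simpa using h),
        zero_mul, zero_mul]

/-- Factorization of `hprob` through the start state. -/
lemma hprobAux_eq_init_mul (σ : Strategy S A Z M.obs) :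
    ∀ (n : ℕ) (s : S) (l : List (A × S)),
      M.hprobAux σ n s l
        = M.init (startOf s l) * (M.resetDirac (startOf s l)).hprobAux σ n s l
  | 0, s, [] => by simp
  | 0, s, (a, s') :: rest => by simp
  | n+1, s, [] => by simp
  | n+1, s, (a, s') :: rest => by
      rw [hprobAux_cons, hprobAux_cons, startOf_cons, resetDirac_δ,
        hprobAux_eq_init_mul σ n s' rest]
      ring

/-- Total mass of length-`n` histories is 1. -/
lemma mass_eq_one (σ : Strategy S A Z M.obs) :
    ∀ n : ℕ, ∑ h ∈ histN n, M.hprob σ n h = 1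
  | 0 => by
      rw [sum_histN]
      simp only [listsN, Finset.sum_singleton]
      simpa [hprob] using M.init_sum
  | n+1 => by
      rw [sum_histN]
      have h1 : ∀ s : S, ∑ l ∈ listsN (n+1), M.hprob σ (n+1) (s, l)
          = ∑ p : A × S, ∑ l ∈ listsN n, M.hprob σ (n+1) (s, p :: l) := by
        intro s; exact sum_listsN_succ n _
      simp only [h1]
      have key : ∀ s : S, ∀ p : A × S, ∀ l : List (A × S),
          M.hprob σ (n+1) (s, p :: l)
            = M.hprobAux σ n p.2 l * σ.act (p.2, l) p.1 * M.δ p.2 p.1 s := by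
        intro s p l; cases p; rfl
      simp only [key]
      rw [Finset.sum_comm]
      have h2 : ∀ p : A × S, ∑ s : S, ∑ l ∈ listsN n,
          M.hprobAux σ n p.2 l * σ.act (p.2, l) p.1 * M.δ p.2 p.1 s
          = ∑ l ∈ listsN n, M.hprobAux σ n p.2 l * σ.act (p.2, l) p.1 := by
        intro p
        rw [Finset.sum_comm]
        refine Finset.sum_congr rfl fun l _ => ?_
        rw [← Finset.mul_sum, M.δ_sum, mul_one]
      simp only [h2]
      have h3 : ∀ q : S, ∑ a : A, ∑ l ∈ listsN n,
          M.hprobAux σ n q l * σ.act (q, l) a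
          = ∑ l ∈ listsN n, M.hprobAux σ n q l := by
        intro q
        rw [Finset.sum_comm]
        refine Finset.sum_congr rfl fun l _ => ?_
        rw [← Finset.mul_sum, σ.act_sum, mul_one]
      calc ∑ p : A × S, ∑ l ∈ listsN n, M.hprobAux σ n p.2 l * σ.act (p.2, l) p.1
          = ∑ q : S, ∑ a : A, ∑ l ∈ listsN n, M.hprobAux σ n q l * σ.act (q, l) a := by
            rw [Fintype.sum_prod_type, Finset.sum_comm]
        _ = ∑ q : S, ∑ l ∈ listsN n, M.hprobAux σ n q l := by simp only [h3]
        _ = ∑ q : S, ∑ l ∈ listsN n, M.hprob σ n (q, l) := by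
            exact Finset.sum_congr rfl fun q _ => Finset.sum_congr rfl fun l _ => rfl
        _ = ∑ h ∈ histN n, M.hprob σ n h := (sum_histN n _).symm
        _ = 1 := mass_eq_one σ n

end POMDP
namespace POMDP

variable {S A Z : Type} [Fintype S] [Fintype A] [Fintype Z]
variable (M : POMDP S A Z) {T : Set S}

lemma sum_swap4 {α β γ δ : Type} (sa : Finset α) (sb : Finset β) (sc : Finset γ) (sd : Finset δ)
    (f : α → β → γ → δ → ℝ) :
    ∑ a ∈ sa, ∑ b ∈ sb, ∑ c ∈ sc, ∑ d ∈ sd, f a b c d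
      = ∑ c ∈ sc, ∑ d ∈ sd, ∑ a ∈ sa, ∑ b ∈ sb, f a b c d := by
  calc ∑ a ∈ sa, ∑ b ∈ sb, ∑ c ∈ sc, ∑ d ∈ sd, f a b c d
      = ∑ a ∈ sa, ∑ c ∈ sc, ∑ b ∈ sb, ∑ d ∈ sd, f a b c d :=
        Finset.sum_congr rfl fun a _ => Finset.sum_comm
    _ = ∑ c ∈ sc, ∑ a ∈ sa, ∑ b ∈ sb, ∑ d ∈ sd, f a b c d := Finset.sum_comm
    _ = ∑ c ∈ sc, ∑ a ∈ sa, ∑ d ∈ sd, ∑ b ∈ sb, f a b c d :=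
        Finset.sum_congr rfl fun c _ => Finset.sum_congr rfl fun a _ => Finset.sum_comm
    _ = ∑ c ∈ sc, ∑ d ∈ sd, ∑ a ∈ sa, ∑ b ∈ sb, f a b c d :=
        Finset.sum_congr rfl fun c _ => Finset.sum_comm

def reachF (M : POMDP S A Z) (T : Set S) (σ : Strategy S A Z M.obs) (n : ℕ) : ℝ :=
  ∑ h ∈ histN n, if visitsT T h then M.hprob σ n h else 0

def avoidF (M : POMDP S A Z) (T : Set S) (σ : Strategy S A Z M.obs) (n : ℕ) : ℝ :=
  ∑ h ∈ histN n, if visitsT T h then 0 else M.hprob σ n h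

lemma reachF_nonneg (σ : Strategy S A Z M.obs) (n : ℕ) : 0 ≤ reachF M T σ n :=
  Finset.sum_nonneg fun h _ => by
    split_ifs
    · exact hprobAux_nonneg M σ n h.1 h.2
    · exact le_rfl

lemma avoidF_nonneg (σ : Strategy S A Z M.obs) (n : ℕ) : 0 ≤ avoidF M T σ n :=
  Finset.sum_nonneg fun h _ => by
    split_ifs
    · exact le_rfl
    · exact hprobAux_nonneg M σ n h.1 h.2

lemma reachF_add_avoidF (σ : Strategy S A Z M.obs) (n : ℕ) :
    reachF M T σ n + avoidF M T σ n = 1 := by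
  rw [reachF, avoidF, ← Finset.sum_add_distrib, ← mass_eq_one M σ n]
  exact Finset.sum_congr rfl fun h _ => by split_ifs <;> simp [hprob]

lemma reachF_le_one (σ : Strategy S A Z M.obs) (n : ℕ) : reachF M T σ n ≤ 1 := by
  have h1 := reachF_add_avoidF M σ n (T := T)
  have h2 := avoidF_nonneg M σ n (T := T)
  linarith

lemma avoidF_le_one (σ : Strategy S A Z M.obs) (n : ℕ) : avoidF M T σ n ≤ 1 := by
  have h1 := reachF_add_avoidF M σ n (T := T)
  have h2 := reachF_nonneg M σ n (T := T)
  linarith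

lemma probReachBy_eq_reachF (σ : Strategy S A Z M.obs) (n : ℕ) :
    M.probReachBy T σ n = reachF M T σ n := by
  rw [probReachBy, reachF]
  refine tsum_eq_sum fun h hh => ?_
  rw [mem_histN] at hh
  have hz : M.hprob σ n h = 0 := hprobAux_eq_zero_of_length_ne M σ n h.1 h.2 hh
  rw [hz, ite_self]

lemma visitsT_cons_of {s : S} {p : A × S} {l : List (A × S)}
    (h : visitsT T (p.2, l)) : visitsT T (s, p :: l) := by
  rcases h with h | ⟨q, hq, hqT⟩
  · exact Or.inr ⟨p, List.mem_cons_self, h⟩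
  · exact Or.inr ⟨q, List.mem_cons_of_mem _ hq, hqT⟩

lemma avoidF_succ_le (σ : Strategy S A Z M.obs) (n : ℕ) :
    avoidF M T σ (n + 1) ≤ avoidF M T σ n := by
  rw [avoidF, sum_histN]
  have h1 : ∀ s : S, ∑ l ∈ listsN (n+1),
      (if visitsT T (s, l) then 0 else M.hprob σ (n+1) (s, l))
      = ∑ p : A × S, ∑ l ∈ listsN n,
          (if visitsT T (s, p :: l) then 0 else M.hprob σ (n+1) (s, p :: l)) := by
    intro s; exact sum_listsN_succ n _
  simp only [h1]
  have key : ∀ (s : S) (p : A × S) (l : List (A × S)),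
      (if visitsT T (s, p :: l) then 0 else M.hprob σ (n+1) (s, p :: l))
        ≤ (if visitsT T (p.2, l) then 0 else M.hprobAux σ n p.2 l)
            * σ.act (p.2, l) p.1 * M.δ p.2 p.1 s := by
    intro s p l
    obtain ⟨a, t⟩ := p
    by_cases hv : visitsT T ((a, t).2, l)
    · rw [if_pos (visitsT_cons_of hv), if_pos hv, zero_mul, zero_mul]
    · rw [if_neg hv]
      split_ifs
      · exact mul_nonneg (mul_nonneg (hprobAux_nonneg M σ n t l) (σ.act_nonneg _ a))
          (M.δ_nonneg t a s)
      · exact le_of_eq rfl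
  calc ∑ s : S, ∑ p : A × S, ∑ l ∈ listsN n,
        (if visitsT T (s, p :: l) then 0 else M.hprob σ (n+1) (s, p :: l))
      ≤ ∑ s : S, ∑ p : A × S, ∑ l ∈ listsN n,
        (if visitsT T (p.2, l) then 0 else M.hprobAux σ n p.2 l)
            * σ.act (p.2, l) p.1 * M.δ p.2 p.1 s := by
        exact Finset.sum_le_sum fun s _ => Finset.sum_le_sum fun p _ =>
          Finset.sum_le_sum fun l _ => key s p l
    _ = ∑ p : A × S, ∑ l ∈ listsN n,
        (if visitsT T (p.2, l) then 0 else M.hprobAux σ n p.2 l) * σ.act (p.2, l) p.1 := by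
        rw [Finset.sum_comm]
        refine Finset.sum_congr rfl fun p _ => ?_
        rw [Finset.sum_comm]
        refine Finset.sum_congr rfl fun l _ => ?_
        rw [← Finset.mul_sum, M.δ_sum, mul_one]
    _ = ∑ t : S, ∑ a : A, ∑ l ∈ listsN n,
        (if visitsT T (t, l) then 0 else M.hprobAux σ n t l) * σ.act (t, l) a := by
        rw [Fintype.sum_prod_type, Finset.sum_comm]
    _ = ∑ t : S, ∑ l ∈ listsN n, (if visitsT T (t, l) then 0 else M.hprobAux σ n t l) := by
        refine Finset.sum_congr rfl fun t _ => ?_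
        rw [Finset.sum_comm]
        refine Finset.sum_congr rfl fun l _ => ?_
        rw [← Finset.mul_sum, σ.act_sum, mul_one]
    _ = ∑ t : S, ∑ l ∈ listsN n, (if visitsT T (t, l) then 0 else M.hprob σ n (t, l)) :=
        Finset.sum_congr rfl fun t _ => Finset.sum_congr rfl fun l _ => rfl
    _ = avoidF M T σ n := by rw [avoidF, sum_histN]

lemma avoidF_antitone (σ : Strategy S A Z M.obs) : Antitone (avoidF M T σ) :=
  antitone_nat_of_succ_le fun n => avoidF_succ_le M σ n

/-- `σ` wins almost surely, phrased via `avoidF`. -/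
def Wins (M : POMDP S A Z) (T : Set S) (σ : Strategy S A Z M.obs) : Prop :=
  ∀ ε : ℝ, 0 < ε → ∃ n, avoidF M T σ n < ε

lemma almostSure_iff_wins (σ : Strategy S A Z M.obs) :
    M.AlmostSure T σ ↔ Wins M T σ := by
  have hrw : ∀ n, M.probReachBy T σ n = 1 - avoidF M T σ n := by
    intro n
    rw [probReachBy_eq_reachF]
    have := reachF_add_avoidF M σ n (T := T)
    linarith
  constructor
  · intro h ε hε
    by_contra hc
    push_neg at hc
    have hb : ∀ n, M.probReachBy T σ n ≤ 1 - ε := by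
      intro n; rw [hrw n]; have := hc n; linarith
    have hle : M.probReach T σ ≤ 1 - ε := by
      rw [probReach]
      refine Real.iSup_le hb ?_
      have h1 := hc 0
      have h2 := avoidF_le_one M σ 0 (T := T)
      linarith
    rw [h] at hle
    linarith
  · intro h
    rw [AlmostSure, probReach]
    have hub : ∀ n, M.probReachBy T σ n ≤ 1 := by
      intro n; rw [probReachBy_eq_reachF]; exact reachF_le_one M σ n
    refine le_antisymm (Real.iSup_le hub one_pos.le) ?_
    refine le_of_forall_pos_le_add ?_
    intro ε hε
    obtain ⟨n, hn⟩ := h ε hε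
    have h1 : 1 - ε ≤ M.probReachBy T σ n := by rw [hrw n]; linarith
    have h2 : M.probReachBy T σ n ≤ ⨆ m, M.probReachBy T σ m :=
      le_ciSup ⟨1, fun x ⟨m, hm⟩ => hm ▸ hub m⟩ n
    linarith

/-- The strategy `σ` shifted by a past history-suffix `l₀`. -/
def shiftStrat {O : S → Z} (σ : Strategy S A Z O) (l₀ : List (A × S)) : Strategy S A Z O where
  act h := σ.act (h.1, h.2 ++ l₀)
  act_nonneg h a := σ.act_nonneg _ a
  act_sum h := σ.act_sum _
  obsBased h h' he := by
    refine σ.obsBased _ _ ?_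
    have h1 : O h.1 = O h'.1 := congrArg Prod.fst he
    have h2 : h.2.map (fun p => (p.1, O p.2)) = h'.2.map (fun p => (p.1, O p.2)) :=
      congrArg Prod.snd he
    unfold obsHist
    simp only [List.map_append]
    rw [h1, h2]

@[simp] lemma shiftStrat_act {O : S → Z} (σ : Strategy S A Z O) (l₀ : List (A × S))
    (h : Hist S A) : (shiftStrat σ l₀).act h = σ.act (h.1, h.2 ++ l₀) := rfl

lemma hprobAux_append (σ : Strategy S A Z M.obs) :
    ∀ (l l₀ : List (A × S)) (s : S),
      M.hprobAux σ (l.length + l₀.length) s (l ++ l₀)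
        = (M.resetDirac (startOf s l)).hprobAux (shiftStrat σ l₀) l.length s l
          * M.hprobAux σ l₀.length (startOf s l) l₀
  | [], l₀, s => by simp
  | (a, s') :: r, l₀, s => by
      have hlen : ((a, s') :: r).length + l₀.length = (r.length + l₀.length) + 1 := by
        simp; omega
      rw [hlen]
      show M.hprobAux σ ((r.length + l₀.length) + 1) s ((a, s') :: (r ++ l₀)) = _
      rw [hprobAux_cons]
      rw [hprobAux_append σ r l₀ s']
      show _ = (M.resetDirac (startOf s' r)).hprobAux (shiftStrat σ l₀) (r.length + 1) s
          ((a, s') :: r) * _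
      rw [hprobAux_cons, shiftStrat_act, resetDirac_δ, startOf_cons]
      ring

lemma sum_listsN_append (m n : ℕ) (g : List (A × S) → ℝ) :
    ∑ L ∈ listsN (m + n), g L = ∑ l ∈ listsN m, ∑ l₀ ∈ listsN n, g (l ++ l₀) := by
  rw [← Finset.sum_product']
  refine Finset.sum_nbij' (i := fun L => (L.take m, L.drop m))
    (j := fun p => p.1 ++ p.2) ?_ ?_ ?_ ?_ ?_
  · intro L hL
    rw [mem_listsN] at hL
    rw [Finset.mem_product, mem_listsN, mem_listsN]
    constructor
    · rw [List.length_take]; omega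
    · rw [List.length_drop]; omega
  · intro p hp
    rw [Finset.mem_product, mem_listsN, mem_listsN] at hp
    rw [mem_listsN, List.length_append]; omega
  · intro L hL
    exact List.take_append_drop m L
  · intro p hp
    rw [Finset.mem_product, mem_listsN, mem_listsN] at hp
    obtain ⟨h1, h2⟩ := hp
    refine Prod.ext ?_ ?_
    · show (p.1 ++ p.2).take m = p.1
      rw [← h1]; exact List.take_left
    · show (p.1 ++ p.2).drop m = p.2
      rw [← h1]; exact List.drop_left
  · intro L hL
    rw [List.take_append_drop]

lemma startOf_visits {s : S} : ∀ {l : List (A × S)}, startOf s l ∈ T → visitsT T (s, l) := by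
  intro l
  induction l generalizing s with
  | nil => intro h; exact Or.inl h
  | cons p r ih =>
      obtain ⟨a, u⟩ := p
      intro h
      rw [startOf_cons] at h
      exact visitsT_cons_of (ih h)

lemma visitsT_append_plain (s : S) (l l₀ : List (A × S)) :
    visitsT T (s, l ++ l₀) ↔ visitsT T (s, l) ∨ ∃ p ∈ l₀, p.2 ∈ T := by
  simp only [visitsT, List.mem_append]
  constructor
  · rintro (h | ⟨p, (hp | hp), hpT⟩)
    · exact Or.inl (Or.inl h)
    · exact Or.inl (Or.inr ⟨p, hp, hpT⟩)
    · exact Or.inr ⟨p, hp, hpT⟩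
  · rintro ((h | ⟨p, hp, hpT⟩) | ⟨p, hp, hpT⟩)
    · exact Or.inl h
    · exact Or.inr ⟨p, Or.inl hp, hpT⟩
    · exact Or.inr ⟨p, Or.inr hp, hpT⟩

lemma visitsT_append (s : S) (l l₀ : List (A × S)) :
    visitsT T (s, l ++ l₀) ↔ visitsT T (s, l) ∨ visitsT T (startOf s l, l₀) := by
  rw [visitsT_append_plain]
  constructor
  · rintro (h | h)
    · exact Or.inl h
    · exact Or.inr (Or.inr h)
  · rintro (h | h)
    · exact Or.inl h
    · rcases h with h | h
      · exact Or.inl (startOf_visits h)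
      · exact Or.inr h

lemma hprobAux_resetDirac_start {t : S} {σ : Strategy S A Z M.obs} {n : ℕ} {s : S}
    {l : List (A × S)} (h : (M.resetDirac t).hprobAux σ n s l ≠ 0) : startOf s l = t := by
  by_contra hc
  exact h (hprobAux_resetDirac_eq_zero M t σ n s l hc)

/-- The big splice: avoiding probability decomposes at time `n`. -/
lemma avoidF_splice (σ : Strategy S A Z M.obs) (m n : ℕ) :
    avoidF M T σ (m + n)
      = ∑ h ∈ histN n, (if visitsT T h then 0
          else M.hprob σ n h * avoidF (M.resetDirac h.1) T (shiftStrat σ h.2) m) := by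
  rw [avoidF, histN, Finset.sum_product]
  have h1 : ∀ s : S, ∑ L ∈ listsN (m + n),
      (if visitsT T (s, L) then 0 else M.hprob σ (m+n) (s, L))
      = ∑ l ∈ listsN m, ∑ l₀ ∈ listsN n,
          (if visitsT T (s, l ++ l₀) then 0 else M.hprob σ (m+n) (s, l ++ l₀)) := by
    intro s; exact sum_listsN_append m n _
  simp only [h1]
  have key : ∀ (s : S) (l l₀ : List (A × S)), l ∈ listsN m → l₀ ∈ listsN n →
      (if visitsT T (s, l ++ l₀) then 0 else M.hprob σ (m+n) (s, l ++ l₀))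
      = ∑ t : S, (if visitsT T (t, l₀) then 0 else M.hprobAux σ n t l₀)
          * (if visitsT T (s, l) then 0
              else (M.resetDirac t).hprobAux (shiftStrat σ l₀) m s l) := by
    intro s l l₀ hl hl₀
    rw [mem_listsN] at hl hl₀
    rw [Finset.sum_eq_single (startOf s l)]
    · by_cases hv : visitsT T (s, l ++ l₀)
      · rw [if_pos hv]
        rw [visitsT_append] at hv
        rcases hv with hv | hv
        · rw [if_pos hv, mul_zero]
        · rw [if_pos hv, zero_mul]
      · rw [if_neg hv]
        rw [visitsT_append] at hv
        push_neg at hv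
        rw [if_neg hv.2, if_neg hv.1]
        show M.hprobAux σ (m + n) s (l ++ l₀) = _
        rw [← hl, ← hl₀, hprobAux_append M σ l l₀ s, hl, hl₀]
        ring
    · intro t _ ht
      by_cases hz : (M.resetDirac t).hprobAux (shiftStrat σ l₀) m s l = 0
      · rw [hz, ite_self, mul_zero]
      · exact absurd (hprobAux_resetDirac_start M hz) (fun he => ht he.symm)
    · intro hns
      exact absurd (Finset.mem_univ _) hns
  calc ∑ s : S, ∑ l ∈ listsN m, ∑ l₀ ∈ listsN n,
        (if visitsT T (s, l ++ l₀) then 0 else M.hprob σ (m+n) (s, l ++ l₀))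
      = ∑ s : S, ∑ l ∈ listsN m, ∑ l₀ ∈ listsN n, ∑ t : S,
          (if visitsT T (t, l₀) then 0 else M.hprobAux σ n t l₀)
          * (if visitsT T (s, l) then 0
              else (M.resetDirac t).hprobAux (shiftStrat σ l₀) m s l) := by
        refine Finset.sum_congr rfl fun s _ => Finset.sum_congr rfl fun l hl =>
          Finset.sum_congr rfl fun l₀ hl₀ => key s l l₀ hl hl₀
    _ = ∑ s : S, ∑ l ∈ listsN m, ∑ t : S, ∑ l₀ ∈ listsN n,
          (if visitsT T (t, l₀) then 0 else M.hprobAux σ n t l₀)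
          * (if visitsT T (s, l) then 0
              else (M.resetDirac t).hprobAux (shiftStrat σ l₀) m s l) := by
        refine Finset.sum_congr rfl fun s _ => Finset.sum_congr rfl fun l _ =>
          Finset.sum_comm
    _ = ∑ t : S, ∑ l₀ ∈ listsN n, ∑ s : S, ∑ l ∈ listsN m,
          (if visitsT T (t, l₀) then 0 else M.hprobAux σ n t l₀)
          * (if visitsT T (s, l) then 0
              else (M.resetDirac t).hprobAux (shiftStrat σ l₀) m s l) := by
        exact sum_swap4 _ _ _ _ _
    _ = ∑ t : S, ∑ l₀ ∈ listsN n,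
          (if visitsT T (t, l₀) then 0 else M.hprobAux σ n t l₀)
          * ∑ s : S, ∑ l ∈ listsN m,
            (if visitsT T (s, l) then 0
              else (M.resetDirac t).hprobAux (shiftStrat σ l₀) m s l) := by
        refine Finset.sum_congr rfl fun t _ => Finset.sum_congr rfl fun l₀ _ => ?_
        rw [Finset.mul_sum]
        refine Finset.sum_congr rfl fun s _ => ?_
        rw [Finset.mul_sum]
    _ = ∑ h ∈ histN n, (if visitsT T h then 0
          else M.hprob σ n h * avoidF (M.resetDirac h.1) T (shiftStrat σ h.2) m) := by
        rw [histN, Finset.sum_product]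
        refine Finset.sum_congr rfl fun t _ => Finset.sum_congr rfl fun l₀ _ => ?_
        by_cases hv : visitsT T (t, l₀)
        · rw [if_pos hv, if_pos hv, zero_mul]
        · rw [if_neg hv, if_neg hv]
          show M.hprobAux σ n t l₀ * _ = M.hprob σ n (t, l₀) * avoidF _ T _ m
          rw [avoidF, sum_histN]
          rfl

end POMDP
namespace POMDP

variable {S A Z : Type} [Fintype S] [Fintype A] [Fintype Z]
variable (M : POMDP S A Z) {T : Set S}

lemma avoidF_eq_sum_init (σ : Strategy S A Z M.obs) (n : ℕ) :
    avoidF M T σ n = ∑ t : S, M.init t * avoidF (M.resetDirac t) T σ n := by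
  rw [avoidF, sum_histN]
  have key : ∀ (s : S) (l : List (A × S)),
      (if visitsT T (s, l) then 0 else M.hprob σ n (s, l))
        = ∑ t : S, M.init t *
            (if visitsT T (s, l) then 0 else (M.resetDirac t).hprobAux σ n s l) := by
    intro s l
    rw [Finset.sum_eq_single (startOf s l)]
    · by_cases hv : visitsT T (s, l)
      · rw [if_pos hv, if_pos hv, mul_zero]
      · rw [if_neg hv, if_neg hv]
        exact hprobAux_eq_init_mul M σ n s l
    · intro t _ ht
      rw [hprobAux_resetDirac_eq_zero M t σ n s l (fun he => ht he.symm), ite_self, mul_zero]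
    · intro h; exact absurd (Finset.mem_univ _) h
  simp only [key]
  calc ∑ s : S, ∑ l ∈ listsN n, ∑ t : S, M.init t *
          (if visitsT T (s, l) then 0 else (M.resetDirac t).hprobAux σ n s l)
      = ∑ s : S, ∑ t : S, ∑ l ∈ listsN n, M.init t *
          (if visitsT T (s, l) then 0 else (M.resetDirac t).hprobAux σ n s l) :=
        Finset.sum_congr rfl fun s _ => Finset.sum_comm
    _ = ∑ t : S, ∑ s : S, ∑ l ∈ listsN n, M.init t *
          (if visitsT T (s, l) then 0 else (M.resetDirac t).hprobAux σ n s l) :=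
        Finset.sum_comm
    _ = ∑ t : S, M.init t * avoidF (M.resetDirac t) T σ n := by
        refine Finset.sum_congr rfl fun t _ => ?_
        rw [avoidF, sum_histN, Finset.mul_sum]
        refine Finset.sum_congr rfl fun s _ => ?_
        rw [Finset.mul_sum]
        exact Finset.sum_congr rfl fun l _ => rfl

lemma wins_iff_dirac (σ : Strategy S A Z M.obs) :
    Wins M T σ ↔ ∀ t : S, M.init t ≠ 0 → Wins (M.resetDirac t) T σ := by
  constructor
  · intro hw t ht ε hε
    have hpos : 0 < M.init t := (M.init_nonneg t).lt_of_ne (Ne.symm ht)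
    obtain ⟨n, hn⟩ := hw (ε * M.init t) (by positivity)
    refine ⟨n, ?_⟩
    have h1 : M.init t * avoidF (M.resetDirac t) T σ n ≤ avoidF M T σ n := by
      rw [avoidF_eq_sum_init M σ n]
      refine Finset.single_le_sum (f := fun t => M.init t * avoidF (M.resetDirac t) T σ n)
        (fun u _ => mul_nonneg (M.init_nonneg u) (avoidF_nonneg (M.resetDirac u) (T := T) σ n)) (Finset.mem_univ t)
    have h2 : M.init t * avoidF (M.resetDirac t) T σ n < M.init t * ε := by
      have hc : ε * M.init t = M.init t * ε := mul_comm _ _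
      linarith
    exact (mul_lt_mul_iff_right₀ hpos).mp h2
  · intro hw ε hε
    have hε2 : 0 < ε / 2 := by positivity
    have hchoice : ∀ t : S, ∃ n, M.init t ≠ 0 → avoidF (M.resetDirac t) T σ n < ε / 2 := by
      intro t
      by_cases ht : M.init t ≠ 0
      · obtain ⟨n, hn⟩ := hw t ht (ε / 2) hε2
        exact ⟨n, fun _ => hn⟩
      · exact ⟨0, fun h => absurd h ht⟩
    choose nf hnf using hchoice
    set N := Finset.univ.sup nf with hN
    refine ⟨N, ?_⟩
    rw [avoidF_eq_sum_init M σ N]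
    have hbound : ∀ t : S, M.init t * avoidF (M.resetDirac t) T σ N ≤ M.init t * (ε / 2) := by
      intro t
      by_cases ht : M.init t ≠ 0
      · refine mul_le_mul_of_nonneg_left ?_ (M.init_nonneg t)
        refine le_trans (avoidF_antitone (M.resetDirac t) σ (Finset.le_sup (Finset.mem_univ t))) ?_
        exact le_of_lt (hnf t ht)
      · push_neg at ht; rw [ht, zero_mul, zero_mul]
    calc ∑ t : S, M.init t * avoidF (M.resetDirac t) T σ N
        ≤ ∑ t : S, M.init t * (ε / 2) := Finset.sum_le_sum fun t _ => hbound t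
      _ = ε / 2 := by rw [← Finset.sum_mul, M.init_sum, one_mul]
      _ < ε := by linarith

lemma wins_shift {σ : Strategy S A Z M.obs} (hw : Wins M T σ) {n : ℕ} {t : S}
    {l₀ : List (A × S)} (hlen : l₀.length = n)
    (hpos : M.hprob σ n (t, l₀) ≠ 0) (hnv : ¬ visitsT T (t, l₀)) :
    Wins (M.resetDirac t) T (shiftStrat σ l₀) := by
  intro ε hε
  have hp : 0 < M.hprob σ n (t, l₀) :=
    (hprobAux_nonneg M σ n t l₀).lt_of_ne (Ne.symm hpos)
  obtain ⟨n', hn'⟩ := hw (ε * M.hprob σ n (t, l₀)) (by positivity)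
  have h1 : avoidF M T σ (n' + n) < ε * M.hprob σ n (t, l₀) :=
    lt_of_le_of_lt (avoidF_antitone M σ (Nat.le_add_right n' n)) hn'
  have hmem : (t, l₀) ∈ histN n := mem_histN.mpr hlen
  have h3 : M.hprob σ n (t, l₀) * avoidF (M.resetDirac t) T (shiftStrat σ l₀) n'
      ≤ avoidF M T σ (n' + n) := by
    rw [avoidF_splice M σ n' n]
    have h5 := Finset.single_le_sum
      (f := fun h : Hist S A => if visitsT T h then 0
        else M.hprob σ n h * avoidF (M.resetDirac h.1) T (shiftStrat σ h.2) n')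
      (fun h _ => by
        dsimp only
        split_ifs
        · exact le_rfl
        · exact mul_nonneg (hprobAux_nonneg M σ n h.1 h.2)
            (avoidF_nonneg (M.resetDirac h.1) (T := T) (shiftStrat σ h.2) n'))
      hmem
    dsimp only at h5
    rw [if_neg hnv] at h5
    exact h5
  refine ⟨n', ?_⟩
  have h4 : M.hprob σ n (t, l₀) * avoidF (M.resetDirac t) T (shiftStrat σ l₀) n'
      < M.hprob σ n (t, l₀) * ε := by
    rw [mul_comm ε _] at h1
    linarith
  exact (mul_lt_mul_iff_right₀ hp).mp h4

lemma wins_of_mem_target {t : S} (ht : t ∈ T) (σ : Strategy S A Z M.obs) :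
    Wins (M.resetDirac t) T σ := by
  intro ε hε
  refine ⟨0, ?_⟩
  have : avoidF (M.resetDirac t) T σ 0 = 0 := by
    rw [avoidF]
    refine Finset.sum_eq_zero fun h _ => ?_
    by_cases hv : visitsT T h
    · rw [if_pos hv]
    · rw [if_neg hv]
      by_contra hz
      have hst : startOf h.1 h.2 = t := hprobAux_resetDirac_start M hz
      exact hv (startOf_visits (hst ▸ ht))
  rw [this]; exact hε

lemma absorbing_eq {t : S} (habs : M.Absorbing T) (ht : t ∈ T) {a : A} {s : S}
    (hδ : M.δ t a s ≠ 0) : s = t := by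
  by_contra hne
  have h1 : ∑ s' : S, M.δ t a s' = 1 := M.δ_sum t a
  have h2 : M.δ t a t = 1 := habs t ht a
  have h3 : ∑ s' ∈ Finset.univ.erase t, M.δ t a s' = 0 := by
    have := Finset.add_sum_erase Finset.univ (M.δ t a) (Finset.mem_univ t)
    rw [h1, h2] at this
    linarith
  have h4 : M.δ t a s = 0 :=
    (Finset.sum_eq_zero_iff_of_nonneg fun u _ => M.δ_nonneg t a u).mp h3 s
      (Finset.mem_erase.mpr ⟨hne, Finset.mem_univ s⟩)
  exact hδ h4

lemma visits_endpoint (habs : M.Absorbing T) (σ : Strategy S A Z M.obs) :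
    ∀ (l : List (A × S)) (n : ℕ) (s : S), M.hprobAux σ n s l ≠ 0 →
      visitsT T (s, l) → s ∈ T
  | [], n, s, _, hv => by
      rcases hv with hv | ⟨p, hp, _⟩
      · exact hv
      · exact absurd hp List.not_mem_nil
  | (a, u) :: r, n, s, hpos, hv => by
      cases n with
      | zero => exact absurd (by simp : M.hprobAux σ 0 s ((a, u) :: r) = 0) hpos
      | succ n =>
        rw [hprobAux_cons] at hpos
        have h1 : M.hprobAux σ n u r ≠ 0 := fun h => hpos (by rw [h, zero_mul, zero_mul])
        have h2 : M.δ u a s ≠ 0 := fun h => hpos (by rw [h, mul_zero])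
        rcases hv with hv | ⟨p, hp, hpT⟩
        · exact hv
        · rw [List.mem_cons] at hp
          rcases hp with hp | hp
          · have hu : u ∈ T := by rw [hp] at hpT; exact hpT
            exact (absorbing_eq M habs hu h2) ▸ hu
          · have hu : u ∈ T :=
              visits_endpoint habs σ r n u h1 (Or.inr ⟨p, hp, hpT⟩)
            exact (absorbing_eq M habs hu h2) ▸ hu

lemma hprobAux_congr_act {σ₁ σ₂ : Strategy S A Z M.obs}
    (hact : ∀ h : Hist S A, σ₁.act h = σ₂.act h) :
    ∀ (n : ℕ) (s : S) (l : List (A × S)), M.hprobAux σ₁ n s l = M.hprobAux σ₂ n s l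
  | 0, s, l => rfl
  | n+1, s, [] => rfl
  | n+1, s, (a, u) :: r => by
      rw [hprobAux_cons, hprobAux_cons, hprobAux_congr_act hact n u r, hact (u, r)]

lemma wins_congr_act {M' : POMDP S A Z} (hobs : M'.obs = M.obs)
    {σ₁ σ₂ : Strategy S A Z M'.obs}
    (hact : ∀ h : Hist S A, σ₁.act h = σ₂.act h) (hw : Wins M' T σ₁) : Wins M' T σ₂ := by
  intro ε hε
  obtain ⟨n, hn⟩ := hw ε hε
  refine ⟨n, ?_⟩
  have : avoidF M' T σ₂ n = avoidF M' T σ₁ n := by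
    rw [avoidF, avoidF]
    exact Finset.sum_congr rfl fun h _ => by
      rw [hprob, hprob, hprobAux_congr_act M' (fun h => (hact h).symm) n h.1 h.2]
  rw [this]; exact hn

end POMDP
namespace POMDP

variable {S A Z : Type} [Fintype S] [Fintype A] [Fintype Z]
variable (M : POMDP S A Z) {T : Set S}

@[simp] lemma reinit_δ (U : Finset S) (h1 h2) : (M.reinit U h1 h2).δ = M.δ := rfl
@[simp] lemma reinit_obs (U : Finset S) (h1 h2) : (M.reinit U h1 h2).obs = M.obs := rfl
@[simp] lemma reinit_init (U : Finset S) (h1 h2) :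
    (M.reinit U h1 h2).init = uniformS U := rfl

lemma reinit_resetDirac (U : Finset S) (h1 h2) (t : S) :
    (M.reinit U h1 h2).resetDirac t = M.resetDirac t := rfl

lemma reinit_updateF (U : Finset S) (h1 h2) :
    (M.reinit U h1 h2).updateF = M.updateF := rfl

lemma reinit_beliefOfFromAux (U : Finset S) (h1 h2) :
    ∀ (l : List (A × S)) (U0 : Finset S) (s : S),
      (M.reinit U h1 h2).beliefOfFromAux U0 s l = M.beliefOfFromAux U0 s l
  | [], U0, s => rfl
  | (a, u) :: r, U0, s => by
      show (M.reinit U h1 h2).updateF ((M.reinit U h1 h2).beliefOfFromAux U0 u r) _ _ = _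
      rw [reinit_beliefOfFromAux U h1 h2 r U0 u]
      rfl

lemma reinit_BeliefWin (U : Finset S) (h1 h2) :
    (M.reinit U h1 h2).BeliefWin T = M.BeliefWin T := rfl

lemma reinit_AllowSet (U : Finset S) (h1 h2) :
    (M.reinit U h1 h2).AllowSet T = M.AllowSet T := rfl

lemma resetDirac_updateF (t : S) : (M.resetDirac t).updateF = M.updateF := rfl
lemma resetDirac_beliefOfFromAux (t : S) :
    ∀ (l : List (A × S)) (U0 : Finset S) (s : S),
      (M.resetDirac t).beliefOfFromAux U0 s l = M.beliefOfFromAux U0 s l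
  | [], U0, s => rfl
  | (a, u) :: r, U0, s => by
      show (M.resetDirac t).updateF ((M.resetDirac t).beliefOfFromAux U0 u r) _ _ = _
      rw [resetDirac_beliefOfFromAux t r U0 u]
      rfl

lemma uniformS_pos {U : Finset S} (hU : U.Nonempty) {s : S} (hs : s ∈ U) :
    0 < uniformS U s := by
  rw [uniformS, if_pos hs]
  have : (0 : ℝ) < U.card := by exact_mod_cast Finset.card_pos.mpr hU
  positivity

lemma reinit_suppInitF (U : Finset S) (h1 h2) :
    (M.reinit U h1 h2).suppInitF = U := by
  ext s
  simp only [suppInitF, Finset.mem_filter, Finset.mem_univ, true_and, reinit_init]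
  constructor
  · intro h; exact uniformS_mem h
  · intro h; exact uniformS_pos h1 h

lemma resetDirac_suppInitF (t : S) : (M.resetDirac t).suppInitF = {t} := by
  ext s
  simp only [suppInitF, Finset.mem_filter, Finset.mem_univ, true_and, resetDirac_init,
    Finset.mem_singleton]
  split_ifs with h
  · simp [h]
  · simp [h]

lemma mem_updateF {U : Finset S} {z : Z} {a : A} {t : S} :
    t ∈ M.updateF U z a ↔ M.obs t = z ∧ ∃ s ∈ U, 0 < M.δ s a t := by
  simp [updateF]

lemma obs_of_mem_beliefOfFromAux (U0 : Finset S) :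
    ∀ (l : List (A × S)) (s u : S), u ∈ M.beliefOfFromAux U0 s l → M.obs u = M.obs s
  | [], s, u => by
      intro h
      simp only [beliefOfFromAux, Finset.mem_filter] at h
      exact h.2
  | (a, s') :: r, s, u => by
      intro h
      simp only [beliefOfFromAux] at h
      exact ((M.mem_updateF).mp h).1

lemma mem_beliefOfFromAux_self {U0 : Finset S} (hU : ∀ s, M.init s ≠ 0 → s ∈ U0)
    (σ : Strategy S A Z M.obs) :
    ∀ (l : List (A × S)) (n : ℕ) (s : S), M.hprobAux σ n s l ≠ 0 →
      s ∈ M.beliefOfFromAux U0 s l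
  | [], n, s, hpos => by
      cases n with
      | zero =>
          rw [hprobAux_zeroN, if_pos rfl] at hpos
          show s ∈ U0.filter _
          exact Finset.mem_filter.mpr ⟨hU s hpos, rfl⟩
      | succ n => exact absurd (hprobAux_nil_succ M σ n s) hpos
  | (a, u) :: r, n, s, hpos => by
      cases n with
      | zero => exact absurd (by simp : M.hprobAux σ 0 s ((a, u) :: r) = 0) hpos
      | succ n =>
          rw [hprobAux_cons] at hpos
          have h1 : M.hprobAux σ n u r ≠ 0 := fun h => hpos (by rw [h, zero_mul, zero_mul])
          have h2 : M.δ u a s ≠ 0 := fun h => hpos (by rw [h, mul_zero])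
          simp only [beliefOfFromAux]
          rw [mem_updateF]
          exact ⟨rfl, u, mem_beliefOfFromAux_self hU σ r n u h1,
            (M.δ_nonneg u a s).lt_of_ne (Ne.symm h2)⟩

lemma beliefOfFromAux_append (U0 : Finset S) (l₀ : List (A × S)) :
    ∀ (l : List (A × S)) (s : S),
      M.beliefOfFromAux U0 s (l ++ l₀)
        = M.beliefOfFromAux (M.beliefOfFromAux U0 (startOf s l) l₀) s l
  | [], s => by
      simp only [List.nil_append, startOf_nil]
      show _ = Finset.filter _ _
      rw [Finset.filter_true_of_mem]
      intro u hu
      exact M.obs_of_mem_beliefOfFromAux U0 l₀ s u hu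
  | (a, u) :: r, s => by
      simp only [List.cons_append, startOf_cons]
      show M.updateF (M.beliefOfFromAux U0 u (r ++ l₀)) (M.obs s) a = _
      rw [beliefOfFromAux_append U0 l₀ r u]
      rfl

/-- Reachability characterization of belief supports: every member of the
belief-support is the endpoint of a positive-probability history with the
same observation sequence. -/
lemma exists_witness (σ : Strategy S A Z M.obs) :
    ∀ (l : List (A × S)) (n : ℕ) (s : S), M.hprobAux σ n s l ≠ 0 →
      ∀ t' ∈ M.beliefOfFromAux M.suppInitF s l,
        ∃ l' : List (A × S), obsHist M.obs (t', l') = obsHist M.obs (s, l)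
          ∧ M.hprobAux σ n t' l' ≠ 0
  | [], n, s, hpos => by
      intro t' ht'
      cases n with
      | zero =>
          simp only [beliefOfFromAux, Finset.mem_filter, suppInitF, Finset.mem_univ,
            true_and] at ht'
          refine ⟨[], ?_, ?_⟩
          · unfold obsHist; simp [ht'.2]
          · rw [hprobAux_zeroN, if_pos rfl]
            exact ne_of_gt ht'.1
      | succ n => exact absurd (hprobAux_nil_succ M σ n s) hpos
  | (a, u) :: r, n, s, hpos => by
      intro t' ht'
      cases n with
      | zero => exact absurd (by simp : M.hprobAux σ 0 s ((a, u) :: r) = 0) hpos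
      | succ n =>
          rw [hprobAux_cons] at hpos
          have h1 : M.hprobAux σ n u r ≠ 0 := fun h => hpos (by rw [h, zero_mul, zero_mul])
          have hact : σ.act (u, r) a ≠ 0 := fun h => hpos (by rw [h, mul_zero, zero_mul])
          simp only [beliefOfFromAux] at ht'
          rw [mem_updateF] at ht'
          obtain ⟨hobs', u', hu', hδ'⟩ := ht'
          obtain ⟨l'', hobs'', hpos''⟩ := exists_witness σ r n u h1 u' hu'
          refine ⟨(a, u') :: l'', ?_, ?_⟩
          · unfold obsHist at hobs'' ⊢
            simp only [List.map_cons]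
            have e1 : M.obs u' = M.obs u := congrArg Prod.fst hobs''
            have e2 : l''.map (fun p => (p.1, M.obs p.2)) = r.map (fun p => (p.1, M.obs p.2)) :=
              congrArg Prod.snd hobs''
            rw [hobs', e1, e2]
          · rw [hprobAux_cons]
            have hacteq : σ.act (u', l'') = σ.act (u, r) := σ.obsBased _ _ hobs''
            rw [hacteq]
            exact mul_ne_zero (mul_ne_zero hpos'' hact) (ne_of_gt hδ')

end POMDP
namespace POMDP

variable {S A Z : Type} [Fintype S] [Fintype A] [Fintype Z]
variable (M : POMDP S A Z) {T : Set S}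

lemma mem_suppInitF_of_ne {s : S} (h : M.init s ≠ 0) : s ∈ M.suppInitF :=
  Finset.mem_filter.mpr ⟨Finset.mem_univ s, (M.init_nonneg s).lt_of_ne (Ne.symm h)⟩

/-- Core lemma: along any positive-probability history of a winning strategy,
the belief-support stays almost-sure winning. -/
lemma belief_win_of_pos (habs : M.Absorbing T) {σ : Strategy S A Z M.obs} (hw : Wins M T σ)
    (l : List (A × S)) (n : ℕ) (s : S) (hlen : l.length = n)
    (hpos : M.hprobAux σ n s l ≠ 0) :
    M.beliefOfFromAux M.suppInitF s l ∈ M.BeliefWin T := by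
  set B := M.beliefOfFromAux M.suppInitF s l with hB
  have hne : B.Nonempty :=
    ⟨s, mem_beliefOfFromAux_self M (fun u hu => mem_suppInitF_of_ne M hu) σ l n s hpos⟩
  have hobs2 : ∀ x ∈ B, ∀ y ∈ B, M.obs x = M.obs y := fun x hx y hy => by
    rw [M.obs_of_mem_beliefOfFromAux _ l s x hx, M.obs_of_mem_beliefOfFromAux _ l s y hy]
  refine ⟨hne, hobs2, shiftStrat σ l, ?_⟩
  rw [almostSure_iff_wins, wins_iff_dirac]
  intro t' ht'
  have ht'B : t' ∈ B := uniformS_mem ((uniformS_nonneg B t').lt_of_ne (Ne.symm ht'))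
  show Wins (M.resetDirac t') T (shiftStrat σ l)
  obtain ⟨l', hobs', hpos'⟩ := M.exists_witness σ l n s hpos t' ht'B
  by_cases htT : t' ∈ T
  · exact wins_of_mem_target M htT _
  · have hlen' : l'.length = n := by
      by_contra hc
      exact hpos' (hprobAux_eq_zero_of_length_ne M σ n t' l' hc)
    have hnv : ¬ visitsT T (t', l') := fun hv => htT (visits_endpoint M habs σ l' n t' hpos' hv)
    have hwsh := wins_shift M hw hlen' hpos' hnv
    refine wins_congr_act M (M' := M.resetDirac t') rfl (σ₁ := shiftStrat σ l') ?_ hwsh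
    intro h2
    show σ.act (h2.1, h2.2 ++ l') = σ.act (h2.1, h2.2 ++ l)
    refine σ.obsBased _ _ ?_
    unfold obsHist
    simp only [List.map_append]
    rw [show l'.map (fun p => (p.1, M.obs p.2)) = l.map (fun p => (p.1, M.obs p.2)) from
      congrArg Prod.snd hobs']

lemma allow_of_pos (habs : M.Absorbing T) {σ : Strategy S A Z M.obs} (hw : Wins M T σ)
    (l : List (A × S)) (n : ℕ) (s : S) (hlen : l.length = n)
    (hpos : M.hprobAux σ n s l ≠ 0) {a : A} (ha : σ.act (s, l) a ≠ 0) :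
    a ∈ M.AllowSet T (M.beliefOfFromAux M.suppInitF s l) := by
  intro z hzne
  obtain ⟨t'', ht''⟩ := hzne
  rw [mem_updateF] at ht''
  obtain ⟨hobs'', s'', hs'', hδ''⟩ := ht''
  obtain ⟨l'', hohist, hpos''⟩ := M.exists_witness σ l n s hpos s'' hs''
  have hlen'' : l''.length = n := by
    by_contra hc
    exact hpos'' (hprobAux_eq_zero_of_length_ne M σ n s'' l'' hc)
  have hact'' : σ.act (s'', l'') a ≠ 0 := by
    rw [show σ.act (s'', l'') = σ.act (s, l) from σ.obsBased _ _ hohist]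
    exact ha
  have hposL : M.hprobAux σ (n+1) t'' ((a, s'') :: l'') ≠ 0 := by
    rw [hprobAux_cons]
    exact mul_ne_zero (mul_ne_zero hpos'' hact'') (ne_of_gt hδ'')
  have hlenL : ((a, s'') :: l'').length = n + 1 := by simp [hlen'']
  have hBW := belief_win_of_pos M habs hw ((a, s'') :: l'') (n+1) t'' hlenL hposL
  have hident : M.beliefOfFromAux M.suppInitF t'' ((a, s'') :: l'')
      = M.updateF (M.beliefOfFromAux M.suppInitF s l) z a := by
    show M.updateF (M.beliefOfFromAux M.suppInitF s'' l'') (M.obs t'') a = _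
    rw [M.beliefOfFromAux_obs M.suppInitF l'' l s'' s (congrArg Prod.snd hohist)
      (congrArg Prod.fst hohist), hobs'']
  rw [hident] at hBW
  exact hBW

lemma allowFin_nonempty [Nonempty A] (habs : M.Absorbing T) {B : Finset S}
    (hBwin : B ∈ M.BeliefWin T) : (M.allowFin T B).Nonempty := by
  obtain ⟨hne, hobs2, σB, hAS⟩ := hBwin
  have hwB : Wins (M.reinit B hne hobs2) T σB := (almostSure_iff_wins (M.reinit B hne hobs2) σB).mp hAS
  obtain ⟨t, htB⟩ := hne.exists_mem
  have hpos : (M.reinit B hne hobs2).hprobAux σB 0 t [] ≠ 0 := by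
    rw [hprobAux_zeroN, if_pos rfl]
    exact ne_of_gt (uniformS_pos hne htB)
  have hacts : ∃ a : A, σB.act (t, []) a ≠ 0 := by
    by_contra hc
    push_neg at hc
    have hsum := σB.act_sum (t, [])
    rw [Finset.sum_eq_zero (fun a _ => hc a)] at hsum
    norm_num at hsum
  obtain ⟨a, ha⟩ := hacts
  have habs' : (M.reinit B hne hobs2).Absorbing T := habs
  have hAllow := allow_of_pos (M.reinit B hne hobs2) habs' hwB [] 0 t rfl hpos ha
  rw [reinit_AllowSet, reinit_beliefOfFromAux, reinit_suppInitF] at hAllow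
  have hfilt : M.beliefOfFromAux B t [] = B := by
    show B.filter _ = B
    refine Finset.filter_true_of_mem fun x hx => hobs2 x hx t htB
  rw [hfilt] at hAllow
  exact ⟨a, Finset.mem_filter.mpr ⟨Finset.mem_univ a, hAllow⟩⟩

end POMDP
namespace POMDP

variable {S A Z : Type} [Fintype S] [Fintype A] [Fintype Z]
variable (M : POMDP S A Z) {T : Set S}

lemma normalize_nonneg {f : S → ℝ} (hf : ∀ u, 0 ≤ f u) (t : S) : 0 ≤ normalize f t :=
  div_nonneg (hf t) (Finset.sum_nonneg fun u _ => hf u)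

lemma normalize_ne_zero_iff {f : S → ℝ} (hne : ∑ u : S, f u ≠ 0) (t : S) :
    normalize f t ≠ 0 ↔ f t ≠ 0 := by
  rw [normalize, div_ne_zero_iff]
  exact ⟨fun h => h.1, fun h => ⟨h, hne⟩⟩

lemma infoOfAux_nonneg : ∀ (l : List (A × S)) (s u : S), 0 ≤ M.infoOfAux s l u
  | [], s, u => normalize_nonneg (fun t => by
      split_ifs
      · exact M.init_nonneg t
      · exact le_rfl) u
  | (a, w) :: r, s, u => normalize_nonneg (fun t => by
      split_ifs
      · exact Finset.sum_nonneg fun v _ =>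
          mul_nonneg (infoOfAux_nonneg r w v) (M.δ_nonneg v a t)
      · exact le_rfl) u

/-- The support of the information state equals the belief-support, along any
history of positive probability. -/
lemma suppF_infoOfAux (σ : Strategy S A Z M.obs) :
    ∀ (l : List (A × S)) (n : ℕ) (s : S), M.hprobAux σ n s l ≠ 0 →
      suppF (M.infoOfAux s l) = M.beliefOfFromAux M.suppInitF s l
  | [], n, s, hpos => by
      cases n with
      | succ n => exact absurd (hprobAux_nil_succ M σ n s) hpos
      | zero =>
        rw [hprobAux_zeroN, if_pos rfl] at hpos
        have hf : ∀ t, (0:ℝ) ≤ if M.obs t = M.obs s then M.init t else 0 := fun t => by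
          split_ifs
          · exact M.init_nonneg t
          · exact le_rfl
        have hsum : ∑ t : S, (if M.obs t = M.obs s then M.init t else 0) ≠ 0 := by
          have hle : (if M.obs s = M.obs s then M.init s else 0)
              ≤ ∑ t : S, (if M.obs t = M.obs s then M.init t else 0) :=
            Finset.single_le_sum (fun t _ => hf t) (Finset.mem_univ s)
          rw [if_pos rfl] at hle
          have : 0 < M.init s := (M.init_nonneg s).lt_of_ne (Ne.symm hpos)
          intro h; rw [h] at hle; linarith
        ext t
        show t ∈ Finset.filter _ _ ↔ t ∈ Finset.filter _ _
        rw [Finset.mem_filter, Finset.mem_filter]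
        have : M.infoOfAux s [] t ≠ 0 ↔ (if M.obs t = M.obs s then M.init t else 0) ≠ 0 :=
          normalize_ne_zero_iff hsum t
        rw [this]
        constructor
        · rintro ⟨_, h⟩
          by_cases ho : M.obs t = M.obs s
          · rw [if_pos ho] at h
            exact ⟨mem_suppInitF_of_ne M h, ho⟩
          · rw [if_neg ho] at h; exact absurd rfl h
        · rintro ⟨hmem, ho⟩
          refine ⟨Finset.mem_univ t, ?_⟩
          rw [if_pos ho]
          exact ne_of_gt (Finset.mem_filter.mp hmem).2
  | (a, u) :: r, n, s, hpos => by
      cases n with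
      | zero => exact absurd (by simp : M.hprobAux σ 0 s ((a, u) :: r) = 0) hpos
      | succ n =>
        rw [hprobAux_cons] at hpos
        have h1 : M.hprobAux σ n u r ≠ 0 := fun h => hpos (by rw [h, zero_mul, zero_mul])
        have h2 : M.δ u a s ≠ 0 := fun h => hpos (by rw [h, mul_zero])
        have IH := suppF_infoOfAux σ r n u h1
        have huB : u ∈ M.beliefOfFromAux M.suppInitF u r :=
          mem_beliefOfFromAux_self M (fun v hv => mem_suppInitF_of_ne M hv) σ r n u h1
        have hu_pos : 0 < M.infoOfAux u r u := by
          have : M.infoOfAux u r u ≠ 0 := by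
            have := IH ▸ huB
            exact (Finset.mem_filter.mp this).2
          exact (infoOfAux_nonneg M r u u).lt_of_ne (Ne.symm this)
        have hg : ∀ t, (0:ℝ) ≤ if M.obs t = M.obs s
            then ∑ v : S, M.infoOfAux u r v * M.δ v a t else 0 := fun t => by
          split_ifs
          · exact Finset.sum_nonneg fun v _ =>
              mul_nonneg (infoOfAux_nonneg M r u v) (M.δ_nonneg v a t)
          · exact le_rfl
        have hsum : ∑ t : S, (if M.obs t = M.obs s
            then ∑ v : S, M.infoOfAux u r v * M.δ v a t else 0) ≠ 0 := by
          have hin : M.infoOfAux u r u * M.δ u a s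
              ≤ ∑ v : S, M.infoOfAux u r v * M.δ v a s :=
            Finset.single_le_sum (fun v _ =>
              mul_nonneg (infoOfAux_nonneg M r u v) (M.δ_nonneg v a s)) (Finset.mem_univ u)
          have hδpos : 0 < M.δ u a s := (M.δ_nonneg u a s).lt_of_ne (Ne.symm h2)
          have hterm : 0 < M.infoOfAux u r u * M.δ u a s := mul_pos hu_pos hδpos
          have hle : (if M.obs s = M.obs s
              then ∑ v : S, M.infoOfAux u r v * M.δ v a s else 0)
              ≤ ∑ t : S, (if M.obs t = M.obs s
                  then ∑ v : S, M.infoOfAux u r v * M.δ v a t else 0) :=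
            Finset.single_le_sum (fun t _ => hg t) (Finset.mem_univ s)
          rw [if_pos rfl] at hle
          intro h; rw [h] at hle
          linarith
        ext t
        show t ∈ Finset.filter _ _ ↔ t ∈ M.updateF _ _ _
        rw [Finset.mem_filter, mem_updateF]
        have hnorm : M.infoOfAux s ((a, u) :: r) t ≠ 0
            ↔ (if M.obs t = M.obs s
                then ∑ v : S, M.infoOfAux u r v * M.δ v a t else 0) ≠ 0 :=
          normalize_ne_zero_iff hsum t
        rw [hnorm]
        constructor
        · rintro ⟨_, h⟩
          by_cases ho : M.obs t = M.obs s
          · rw [if_pos ho] at h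
            have : ∃ v ∈ (Finset.univ : Finset S), M.infoOfAux u r v * M.δ v a t ≠ 0 := by
              by_contra hc
              push_neg at hc
              exact h (Finset.sum_eq_zero hc)
            obtain ⟨v, _, hv⟩ := this
            have hv1 : M.infoOfAux u r v ≠ 0 := fun hz => hv (by rw [hz, zero_mul])
            have hv2 : M.δ v a t ≠ 0 := fun hz => hv (by rw [hz, mul_zero])
            refine ⟨ho, v, ?_, (M.δ_nonneg v a t).lt_of_ne (Ne.symm hv2)⟩
            rw [← IH]
            exact Finset.mem_filter.mpr ⟨Finset.mem_univ v, hv1⟩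
          · rw [if_neg ho] at h; exact absurd rfl h
        · rintro ⟨ho, v, hvB, hδv⟩
          refine ⟨Finset.mem_univ t, ?_⟩
          rw [if_pos ho]
          have hv1 : M.infoOfAux u r v ≠ 0 := by
            rw [← IH] at hvB
            exact (Finset.mem_filter.mp hvB).2
          have hterm : 0 < M.infoOfAux u r v * M.δ v a t :=
            mul_pos ((infoOfAux_nonneg M r u v).lt_of_ne (Ne.symm hv1)) hδv
          have hle : M.infoOfAux u r v * M.δ v a t
              ≤ ∑ w : S, M.infoOfAux u r w * M.δ w a t :=
            Finset.single_le_sum (fun w _ =>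
              mul_nonneg (infoOfAux_nonneg M r u w) (M.δ_nonneg w a t)) (Finset.mem_univ v)
          intro h; rw [h] at hle; linarith

lemma uniformA_ne_zero {F : Finset A} {a : A} (h : uniformA F a ≠ 0) : a ∈ F := by
  by_contra hc
  rw [uniformA, if_neg hc] at h
  exact h rfl

lemma mem_allowSet_of_allowFin {B : Finset S} {a : A} (h : a ∈ M.allowFin T B) :
    a ∈ M.AllowSet T B := (Finset.mem_filter.mp h).2

/-- Invariant: along positive-probability histories of `σ*_k`, the
belief-support remains almost-sure winning. -/
lemma stratStar_invariant [Nonempty A] (habs : M.Absorbing T) (c : S → A → ℝ) (k : ℕ)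
    (hinit : M.suppInitF ∈ M.BeliefWin T) :
    ∀ (l : List (A × S)) (n : ℕ) (s : S),
      M.hprobAux (M.stratStar T c k) n s l ≠ 0 →
      M.beliefOfFromAux M.suppInitF s l ∈ M.BeliefWin T
  | [], n, s, hpos => by
      cases n with
      | succ n => exact absurd (hprobAux_nil_succ M _ n s) hpos
      | zero =>
        rw [hprobAux_zeroN, if_pos rfl] at hpos
        have : M.beliefOfFromAux M.suppInitF s [] = M.suppInitF := by
          show Finset.filter _ _ = _
          refine Finset.filter_true_of_mem fun x hx => ?_
          exact M.init_obs x s (Finset.mem_filter.mp hx).2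
            ((M.init_nonneg s).lt_of_ne (Ne.symm hpos))
        rw [this]; exact hinit
  | (a, u) :: r, n, s, hpos => by
      cases n with
      | zero => exact absurd (by simp : M.hprobAux _ 0 s ((a, u) :: r) = 0) hpos
      | succ n =>
        rw [hprobAux_cons] at hpos
        have h1 : M.hprobAux (M.stratStar T c k) n u r ≠ 0 :=
          fun h => hpos (by rw [h, zero_mul, zero_mul])
        have hact : (M.stratStar T c k).act (u, r) a ≠ 0 :=
          fun h => hpos (by rw [h, mul_zero, zero_mul])
        have h2 : M.δ u a s ≠ 0 := fun h => hpos (by rw [h, mul_zero])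
        have IH : M.beliefOfFromAux M.suppInitF u r ∈ M.BeliefWin T :=
          stratStar_invariant habs c k hinit r n u h1
        set B' := M.beliefOfFromAux M.suppInitF u r with hB'
        have huB : u ∈ B' :=
          mem_beliefOfFromAux_self M (fun v hv => mem_suppInitF_of_ne M hv) _ r n u h1
        have hallow : a ∈ M.AllowSet T B' := by
          have hsupp : suppF (M.infoOf (u, r)) = B' := M.suppF_infoOfAux _ r n u h1
          have hne : (M.allowFin T B').Nonempty := M.allowFin_nonempty habs IH
          by_cases hlt : r.length < k
          · have hact' : M.actFO T c k (u, r) a ≠ 0 := by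
              have he : (M.stratStar T c k).act (u, r) = M.actFO T c k (u, r) := by
                show (if (u, r).2.length < k then M.actFO T c k (u, r)
                  else M.actAllowFrom T M.suppInitF (u, r)) = M.actFO T c k (u, r)
                rw [if_pos hlt]
              rw [he] at hact
              exact hact
            have ha_eq : a = M.foAct T c (k - (u, r).2.length) (M.infoOf (u, r)) := by
              by_contra hc
              unfold actFO at hact'
              rw [if_neg hc] at hact'
              exact hact' rfl
            obtain ⟨j, hj⟩ : ∃ j, k - (u, r).2.length = j + 1 :=
              ⟨k - r.length - 1, by simp only []; omega⟩
            rw [hj] at ha_eq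
            have hneS : (M.allowFin T (suppF (M.infoOf (u, r)))).Nonempty := by
              rw [hsupp]; exact hne
            have hfo : M.foAct T c (j+1) (M.infoOf (u, r))
                ∈ M.allowFin T (suppF (M.infoOf (u, r))) := by
              simp only [foAct]
              rw [dif_pos hneS]
              exact (Classical.choose_spec (Finset.exists_mem_eq_inf' hneS _)).1
            refine mem_allowSet_of_allowFin M ?_
            rw [← hsupp, ha_eq]
            exact hfo
          · have hact' : M.actAllowFrom T M.suppInitF (u, r) a ≠ 0 := by
              have he : (M.stratStar T c k).act (u, r)
                  = M.actAllowFrom T M.suppInitF (u, r) := by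
                show (if (u, r).2.length < k then M.actFO T c k (u, r)
                  else M.actAllowFrom T M.suppInitF (u, r)) = _
                rw [if_neg hlt]
              rw [he] at hact
              exact hact
            have he2 : M.actAllowFrom T M.suppInitF (u, r)
                = uniformA (M.allowFin T B') := by
              rw [actAllowFrom]
              have hBF : M.beliefOfFrom M.suppInitF (u, r) = B' := rfl
              rw [hBF, if_pos hne]
            rw [he2] at hact'
            exact mem_allowSet_of_allowFin M (uniformA_ne_zero hact')
        have hmem : s ∈ M.updateF B' (M.obs s) a := by
          rw [mem_updateF]
          exact ⟨rfl, u, huB, (M.δ_nonneg u a s).lt_of_ne (Ne.symm h2)⟩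
        exact hallow (M.obs s) ⟨s, hmem⟩

/-- Invariant for `σ_Allow` started from a winning belief `B` at `t ∈ B`. -/
lemma stratAllow_invariant [Nonempty A] (habs : M.Absorbing T) {B : Finset S}
    (hBwin : B ∈ M.BeliefWin T) {t : S} (htB : t ∈ B) :
    ∀ (l : List (A × S)) (n : ℕ) (s : S),
      (M.resetDirac t).hprobAux (M.stratAllowFrom T B) n s l ≠ 0 →
      M.beliefOfFromAux B s l ∈ M.BeliefWin T := by
  intro l
  induction l with
  | nil =>
      intro n s hpos
      cases n with
      | succ n => exact absurd (hprobAux_nil_succ (M.resetDirac t) _ n s) hpos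
      | zero =>
        rw [hprobAux_zeroN, if_pos rfl] at hpos
        have hst : s = t := by
          by_contra hc
          rw [resetDirac_init, if_neg hc] at hpos
          exact hpos rfl
        obtain ⟨hne, hobs2, -⟩ := id hBwin
        have hfil : M.beliefOfFromAux B s [] = B := by
          show Finset.filter _ _ = _
          refine Finset.filter_true_of_mem fun x hx => ?_
          rw [hst]
          exact hobs2 x hx t htB
        rw [hfil]; exact hBwin
  | cons p r IHr =>
      obtain ⟨a, u⟩ := p
      intro n s hpos
      cases n with
      | zero => exact absurd (by simp : (M.resetDirac t).hprobAux _ 0 s ((a, u) :: r) = 0) hpos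
      | succ n =>
        rw [hprobAux_cons] at hpos
        have h1 : (M.resetDirac t).hprobAux (M.stratAllowFrom T B) n u r ≠ 0 :=
          fun h => hpos (by rw [h, zero_mul, zero_mul])
        have hact : (M.stratAllowFrom T B).act (u, r) a ≠ 0 :=
          fun h => hpos (by rw [h, mul_zero, zero_mul])
        have h2 : M.δ u a s ≠ 0 :=
          fun h => hpos (by rw [resetDirac_δ M t, h, mul_zero])
        have IH : M.beliefOfFromAux B u r ∈ M.BeliefWin T := IHr n u h1
        set B' := M.beliefOfFromAux B u r with hB'
        have huB : u ∈ B' := by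
          have := mem_beliefOfFromAux_self (M.resetDirac t)
            (fun v hv => by
              by_cases hc : v = t
              · rw [hc]; exact htB
              · rw [resetDirac_init, if_neg hc] at hv; exact absurd rfl hv)
            (M.stratAllowFrom T B) r n u h1
          rw [resetDirac_beliefOfFromAux] at this
          exact this
        have hne : (M.allowFin T B').Nonempty := M.allowFin_nonempty habs IH
        have hallow : a ∈ M.AllowSet T B' := by
          have he2 : M.actAllowFrom T B (u, r) = uniformA (M.allowFin T B') := by
            rw [actAllowFrom]
            have hBF : M.beliefOfFrom B (u, r) = B' := rfl
            rw [hBF, if_pos hne]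
          have hact' : M.actAllowFrom T B (u, r) a ≠ 0 := hact
          rw [he2] at hact'
          exact mem_allowSet_of_allowFin M (uniformA_ne_zero hact')
        have hmem : s ∈ M.updateF B' (M.obs s) a := by
          rw [mem_updateF]
          exact ⟨rfl, u, huB, (M.δ_nonneg u a s).lt_of_ne (Ne.symm h2)⟩
        exact hallow (M.obs s) ⟨s, hmem⟩

end POMDP
namespace POMDP

variable {S A Z : Type} [Fintype S] [Fintype A] [Fintype Z]
variable (M : POMDP S A Z) {T : Set S}

lemma hprobAux_congr_act_start {t : S} {σ₁ σ₂ : Strategy S A Z M.obs}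
    (hact : ∀ s (l : List (A × S)), startOf s l = t → σ₁.act (s, l) = σ₂.act (s, l)) :
    ∀ (l : List (A × S)) (n : ℕ) (s : S),
      (M.resetDirac t).hprobAux σ₁ n s l = (M.resetDirac t).hprobAux σ₂ n s l := by
  intro l
  induction l with
  | nil => intro n s; cases n <;> rfl
  | cons p r IH =>
      obtain ⟨a, u⟩ := p
      intro n s
      cases n with
      | zero => rfl
      | succ n =>
        rw [hprobAux_cons, hprobAux_cons]
        by_cases hst : startOf u r = t
        · rw [IH n u, hact u r hst]
        · rw [hprobAux_resetDirac_eq_zero M t σ₁ n u r hst,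
            hprobAux_resetDirac_eq_zero M t σ₂ n u r hst, zero_mul, zero_mul,
            zero_mul, zero_mul]

lemma avoidF_congr_act_start {t : S} {σ₁ σ₂ : Strategy S A Z M.obs}
    (hact : ∀ s (l : List (A × S)), startOf s l = t → σ₁.act (s, l) = σ₂.act (s, l))
    (n : ℕ) : avoidF (M.resetDirac t) T σ₁ n = avoidF (M.resetDirac t) T σ₂ n := by
  rw [avoidF, avoidF]
  refine Finset.sum_congr rfl fun h _ => ?_
  rw [hprob, hprob, hprobAux_congr_act_start M hact h.2 n h.1]

lemma uniformA_ne_zero_of_mem {F : Finset A} {a : A} (ha : a ∈ F) : uniformA F a ≠ 0 := by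
  rw [uniformA, if_pos ha]
  have : (F.card : ℝ) ≠ 0 := by
    exact_mod_cast Finset.card_ne_zero.mpr ⟨a, ha⟩
  exact inv_ne_zero this

lemma reachF_mono (σ : Strategy S A Z M.obs) : Monotone (reachF M T σ) := by
  intro m n hmn
  have h1 := reachF_add_avoidF M σ m (T := T)
  have h2 := reachF_add_avoidF M σ n (T := T)
  have h3 := avoidF_antitone M σ hmn (T := T)
  linarith

/-- Positive-probability histories of a winning strategy remain positive under
`σ_Allow`. -/
lemma stratAllow_pos_of_pos [Nonempty A] (habs : M.Absorbing T) {B : Finset S}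
    (hne : B.Nonempty) (hobs2 : ∀ s ∈ B, ∀ s' ∈ B, M.obs s = M.obs s')
    (σB : Strategy S A Z M.obs) (hwB : Wins (M.reinit B hne hobs2) T σB)
    {t : S} (htB : t ∈ B) :
    ∀ (l : List (A × S)) (n : ℕ) (s : S),
      (M.resetDirac t).hprobAux σB n s l ≠ 0 →
      (M.resetDirac t).hprobAux (M.stratAllowFrom T B) n s l ≠ 0 := by
  intro l
  induction l with
  | nil => intro n s hpos; cases n <;> exact hpos
  | cons p r IH =>
      obtain ⟨a, u⟩ := p
      intro n s hpos
      cases n with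
      | zero =>
          exact absurd (by simp : (M.resetDirac t).hprobAux σB 0 s ((a, u) :: r) = 0) hpos
      | succ n =>
        rw [hprobAux_cons] at hpos ⊢
        have h1 : (M.resetDirac t).hprobAux σB n u r ≠ 0 :=
          fun h => hpos (by rw [h, zero_mul, zero_mul])
        have hactB : σB.act (u, r) a ≠ 0 :=
          fun h => hpos (by rw [h, mul_zero, zero_mul])
        have h2 : (M.resetDirac t).δ u a s ≠ 0 := fun h => hpos (by rw [h, mul_zero])
        have hstart : startOf u r = t := hprobAux_resetDirac_start M h1
        have hlen : r.length = n := by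
          by_contra hc
          exact h1 (hprobAux_eq_zero_of_length_ne (M.resetDirac t) σB n u r hc)
        have hposR : (M.reinit B hne hobs2).hprobAux σB n u r ≠ 0 := by
          rw [hprobAux_eq_init_mul (M.reinit B hne hobs2) σB n u r]
          have : (M.reinit B hne hobs2).init (startOf u r) ≠ 0 := by
            rw [hstart]
            exact ne_of_gt (uniformS_pos hne htB)
          refine mul_ne_zero this ?_
          rw [hstart]
          exact h1
        have hBW : M.beliefOfFromAux B u r ∈ M.BeliefWin T := by
          have hh := belief_win_of_pos (M.reinit B hne hobs2) habs hwB r n u hlen hposR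
          rw [reinit_suppInitF] at hh
          rw [reinit_beliefOfFromAux M B hne hobs2 r B u] at hh
          rw [reinit_BeliefWin] at hh
          exact hh
        have hAllowa : a ∈ M.AllowSet T (M.beliefOfFromAux B u r) := by
          have hh := allow_of_pos (M.reinit B hne hobs2) habs hwB r n u hlen hposR hactB
          rw [reinit_suppInitF] at hh
          rw [reinit_beliefOfFromAux M B hne hobs2 r B u] at hh
          rw [reinit_AllowSet] at hh
          exact hh
        have hneA : (M.allowFin T (M.beliefOfFromAux B u r)).Nonempty :=
          M.allowFin_nonempty habs hBW
        have hactA : (M.stratAllowFrom T B).act (u, r) a ≠ 0 := by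
          have he : (M.stratAllowFrom T B).act (u, r)
              = uniformA (M.allowFin T (M.beliefOfFromAux B u r)) := by
            show M.actAllowFrom T B (u, r) = _
            rw [actAllowFrom]
            have hBF : M.beliefOfFrom B (u, r) = M.beliefOfFromAux B u r := rfl
            rw [hBF, if_pos hneA]
          rw [he]
          exact uniformA_ne_zero_of_mem
            (Finset.mem_filter.mpr ⟨Finset.mem_univ a, hAllowa⟩)
        exact mul_ne_zero (mul_ne_zero (IH n u h1) hactA) h2

/-- From each state of a winning belief-support, `σ_Allow` reaches the target
with positive probability. -/
lemma exists_reach_pos [Nonempty A] (habs : M.Absorbing T) {B : Finset S}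
    (hBwin : B ∈ M.BeliefWin T) {t : S} (htB : t ∈ B) :
    ∃ n, 0 < reachF (M.resetDirac t) T (M.stratAllowFrom T B) n := by
  obtain ⟨hne, hobs2, σB, hAS⟩ := hBwin
  have hwB : Wins (M.reinit B hne hobs2) T σB :=
    (almostSure_iff_wins (M.reinit B hne hobs2) σB).mp hAS
  have hwt : Wins (M.resetDirac t) T σB := by
    have hd := (wins_iff_dirac (M.reinit B hne hobs2) σB).mp hwB t
      (ne_of_gt (uniformS_pos hne htB))
    exact hd
  obtain ⟨n, hn⟩ := hwt 1 one_pos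
  have hr : 0 < reachF (M.resetDirac t) T σB n := by
    have := reachF_add_avoidF (M.resetDirac t) σB n (T := T)
    linarith
  have hsum : ∑ h ∈ histN n, (if visitsT T h then
      (M.resetDirac t).hprob σB n h else 0) ≠ 0 := ne_of_gt hr
  obtain ⟨h, hmem, hterm⟩ := Finset.exists_ne_zero_of_sum_ne_zero hsum
  have hv : visitsT T h := by
    by_contra hc
    rw [if_neg hc] at hterm
    exact hterm rfl
  rw [if_pos hv] at hterm
  have hposA : (M.resetDirac t).hprob (M.stratAllowFrom T B) n h ≠ 0 :=
    stratAllow_pos_of_pos M habs hne hobs2 σB hwB htB h.2 n h.1 hterm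
  refine ⟨n, ?_⟩
  have hle : (if visitsT T h then (M.resetDirac t).hprob (M.stratAllowFrom T B) n h else 0)
      ≤ reachF (M.resetDirac t) T (M.stratAllowFrom T B) n := by
    rw [reachF]
    refine Finset.single_le_sum (f := fun h' : Hist S A => if visitsT T h' then
      (M.resetDirac t).hprob (M.stratAllowFrom T B) n h' else 0) (fun h' _ => ?_) hmem
    split_ifs
    · exact hprobAux_nonneg (M.resetDirac t) _ n h'.1 h'.2
    · exact le_rfl
  rw [if_pos hv] at hle
  have hpos' : 0 < (M.resetDirac t).hprob (M.stratAllowFrom T B) n h :=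
    (hprobAux_nonneg (M.resetDirac t) _ n h.1 h.2).lt_of_ne (Ne.symm hposA)
  linarith

end POMDP
namespace POMDP

variable {S A Z : Type} [Fintype S] [Fintype A] [Fintype Z]
variable (M : POMDP S A Z) {T : Set S}

lemma actAllowFrom_append (U0 : Finset S) {u : S} {l' l₀ : List (A × S)} {s : S}
    (hst : startOf s l' = u) :
    M.actAllowFrom T U0 (s, l' ++ l₀)
      = M.actAllowFrom T (M.beliefOfFromAux U0 u l₀) (s, l') := by
  rw [actAllowFrom, actAllowFrom]
  have hbel : M.beliefOfFrom U0 (s, l' ++ l₀)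
      = M.beliefOfFrom (M.beliefOfFromAux U0 u l₀) (s, l') := by
    show M.beliefOfFromAux U0 s (l' ++ l₀) = M.beliefOfFromAux (M.beliefOfFromAux U0 u l₀) s l'
    rw [M.beliefOfFromAux_append U0 l₀ l' s, hst]
  rw [hbel]

lemma wins_stratStar [Nonempty A] (habs : M.Absorbing T) (c : S → A → ℝ) (k : ℕ)
    (hinit : M.suppInitF ∈ M.BeliefWin T) : Wins M T (M.stratStar T c k) := by
  classical
  set WP : Finset (Finset S × S) :=
    Finset.univ.filter (fun p => p.1 ∈ M.BeliefWin T ∧ p.2 ∈ p.1) with hWP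
  have hWPne : WP.Nonempty := by
    obtain ⟨s0, hs0⟩ : ∃ s, M.init s ≠ 0 := by
      by_contra hc
      push_neg at hc
      have h1 := M.init_sum
      rw [Finset.sum_eq_zero (fun s _ => hc s)] at h1
      norm_num at h1
    refine ⟨(M.suppInitF, s0), ?_⟩
    rw [hWP, Finset.mem_filter]
    exact ⟨Finset.mem_univ _, hinit, mem_suppInitF_of_ne M hs0⟩
  have hchoice : ∀ p : Finset S × S, ∃ n, (p.1 ∈ M.BeliefWin T ∧ p.2 ∈ p.1) →
      0 < reachF (M.resetDirac p.2) T (M.stratAllowFrom T p.1) n := by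
    intro p
    by_cases hp : p.1 ∈ M.BeliefWin T ∧ p.2 ∈ p.1
    · obtain ⟨n, hn⟩ := M.exists_reach_pos habs hp.1 hp.2
      exact ⟨n, fun _ => hn⟩
    · exact ⟨0, fun h => absurd h hp⟩
  choose nOf hnOf using hchoice
  set N := Finset.univ.sup nOf with hN
  have hreachN : ∀ p ∈ WP, 0 < reachF (M.resetDirac p.2) T (M.stratAllowFrom T p.1) N := by
    intro p hp
    rw [hWP, Finset.mem_filter] at hp
    exact lt_of_lt_of_le (hnOf p hp.2)
      (reachF_mono (M.resetDirac p.2) _ (Finset.le_sup (Finset.mem_univ p)))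
  set q := WP.inf' hWPne
    (fun p => reachF (M.resetDirac p.2) T (M.stratAllowFrom T p.1) N) with hq
  have hqpos : 0 < q := by
    rw [hq, Finset.lt_inf'_iff]
    exact hreachN
  have hqle : ∀ B t, B ∈ M.BeliefWin T → t ∈ B →
      q ≤ reachF (M.resetDirac t) T (M.stratAllowFrom T B) N := by
    intro B t hB ht
    have hmm : (B, t) ∈ WP := by
      rw [hWP, Finset.mem_filter]
      exact ⟨Finset.mem_univ _, hB, ht⟩
    rw [hq]
    exact Finset.inf'_le _ hmm
  have hq1 : q ≤ 1 := by
    obtain ⟨p, hp⟩ := hWPne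
    exact le_trans (Finset.inf'_le _ hp) (reachF_le_one (M.resetDirac p.2) _ N)
  -- contraction for σ_Allow
  have hcontr : ∀ B t, B ∈ M.BeliefWin T → t ∈ B → ∀ n,
      avoidF (M.resetDirac t) T (M.stratAllowFrom T B) (N + n)
        ≤ (1 - q) * avoidF (M.resetDirac t) T (M.stratAllowFrom T B) n := by
    intro B t hB ht n
    rw [avoidF_splice (M.resetDirac t) (M.stratAllowFrom T B) N n]
    have hbound : ∀ h ∈ histN (S := S) (A := A) n,
        (if visitsT T h then 0 else (M.resetDirac t).hprob (M.stratAllowFrom T B) n h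
            * avoidF ((M.resetDirac t).resetDirac h.1) T
                (shiftStrat (M.stratAllowFrom T B) h.2) N)
        ≤ (if visitsT T h then 0
            else (M.resetDirac t).hprob (M.stratAllowFrom T B) n h) * (1 - q) := by
      intro h _
      by_cases hv : visitsT T h
      · rw [if_pos hv, if_pos hv, zero_mul]
      · rw [if_neg hv, if_neg hv]
        by_cases hz : (M.resetDirac t).hprob (M.stratAllowFrom T B) n h = 0
        · rw [hz, zero_mul, zero_mul]
        · have hB'' := M.stratAllow_invariant habs hB ht h.2 n h.1 hz
          have ht'' : h.1 ∈ M.beliefOfFromAux B h.1 h.2 := by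
            have hmm := mem_beliefOfFromAux_self (M.resetDirac t)
              (fun v hv' => by
                by_cases hcv : v = t
                · rw [hcv]; exact ht
                · rw [resetDirac_init, if_neg hcv] at hv'; exact absurd rfl hv')
              (M.stratAllowFrom T B) h.2 n h.1 hz
            rw [resetDirac_beliefOfFromAux] at hmm
            exact hmm
          have hcongr : avoidF ((M.resetDirac t).resetDirac h.1) T
              (shiftStrat (M.stratAllowFrom T B) h.2) N
              = avoidF (M.resetDirac h.1) T
                  (M.stratAllowFrom T (M.beliefOfFromAux B h.1 h.2)) N := by
            refine avoidF_congr_act_start M (t := h.1) (fun s l' hst => ?_) N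
            show M.actAllowFrom T B (s, l' ++ h.2) = _
            exact M.actAllowFrom_append B hst
          rw [hcongr]
          have havoid : avoidF (M.resetDirac h.1) T
              (M.stratAllowFrom T (M.beliefOfFromAux B h.1 h.2)) N ≤ 1 - q := by
            have hr := hqle _ _ hB'' ht''
            have h2 := reachF_add_avoidF (M.resetDirac h.1)
              (M.stratAllowFrom T (M.beliefOfFromAux B h.1 h.2)) N (T := T)
            linarith
          exact mul_le_mul_of_nonneg_left havoid
            (hprobAux_nonneg (M.resetDirac t) _ n h.1 h.2)
    refine le_trans (Finset.sum_le_sum hbound) ?_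
    rw [← Finset.sum_mul, mul_comm]
    have : ∑ h ∈ histN n, (if visitsT T h then 0
        else (M.resetDirac t).hprob (M.stratAllowFrom T B) n h)
        = avoidF (M.resetDirac t) T (M.stratAllowFrom T B) n := rfl
    rw [this]
  -- geometric decay
  have hgeo : ∀ B t, B ∈ M.BeliefWin T → t ∈ B → ∀ m,
      avoidF (M.resetDirac t) T (M.stratAllowFrom T B) (m * N) ≤ (1 - q) ^ m := by
    intro B t hB ht m
    induction m with
    | zero =>
        have h0 : 0 * N = 0 := by ring
        rw [h0, pow_zero]
        exact avoidF_le_one (M.resetDirac t) _ 0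
    | succ m IH =>
        have hms : (m + 1) * N = N + m * N := by ring
        rw [hms]
        refine le_trans (hcontr B t hB ht (m * N)) ?_
        rw [pow_succ]
        calc (1 - q) * avoidF (M.resetDirac t) T (M.stratAllowFrom T B) (m * N)
            ≤ (1 - q) * (1 - q) ^ m :=
              mul_le_mul_of_nonneg_left IH (by linarith)
          _ = (1 - q) ^ m * (1 - q) := mul_comm _ _
  -- final bound for σ*_k
  intro ε hε
  obtain ⟨m, hm⟩ := exists_pow_lt_of_lt_one hε (show 1 - q < 1 by linarith)
  refine ⟨m * N + k, ?_⟩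
  rw [avoidF_splice M (M.stratStar T c k) (m * N) k]
  have hbound : ∀ h ∈ histN (S := S) (A := A) k,
      (if visitsT T h then 0 else M.hprob (M.stratStar T c k) k h
          * avoidF (M.resetDirac h.1) T (shiftStrat (M.stratStar T c k) h.2) (m * N))
      ≤ (if visitsT T h then 0 else M.hprob (M.stratStar T c k) k h) * (1 - q) ^ m := by
    intro h hmem
    by_cases hv : visitsT T h
    · rw [if_pos hv, if_pos hv, zero_mul]
    · rw [if_neg hv, if_neg hv]
      by_cases hz : M.hprob (M.stratStar T c k) k h = 0
      · rw [hz, zero_mul, zero_mul]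
      · have hB'' := M.stratStar_invariant habs c k hinit h.2 k h.1 hz
        have ht'' : h.1 ∈ M.beliefOfFromAux M.suppInitF h.1 h.2 :=
          mem_beliefOfFromAux_self M (fun v hv' => mem_suppInitF_of_ne M hv')
            (M.stratStar T c k) h.2 k h.1 hz
        have hlenk : h.2.length = k := mem_histN.mp hmem
        have hcongr : avoidF (M.resetDirac h.1) T
            (shiftStrat (M.stratStar T c k) h.2) (m * N)
            = avoidF (M.resetDirac h.1) T
                (M.stratAllowFrom T (M.beliefOfFromAux M.suppInitF h.1 h.2)) (m * N) := by
          refine avoidF_congr_act_start M (t := h.1) (fun s l' hst => ?_) (m * N)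
          show (M.stratStar T c k).act (s, l' ++ h.2) = _
          have hnlt : ¬ ((s, l' ++ h.2).2.length < k) := by
            simp only [List.length_append, hlenk]
            omega
          have he : (M.stratStar T c k).act (s, l' ++ h.2)
              = M.actAllowFrom T M.suppInitF (s, l' ++ h.2) := by
            show (if (s, l' ++ h.2).2.length < k then M.actFO T c k (s, l' ++ h.2)
              else M.actAllowFrom T M.suppInitF (s, l' ++ h.2)) = _
            rw [if_neg hnlt]
          rw [he]
          exact M.actAllowFrom_append M.suppInitF hst
        rw [hcongr]
        exact mul_le_mul_of_nonneg_left (hgeo _ _ hB'' ht'' m)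
          (hprobAux_nonneg M _ k h.1 h.2)
  refine lt_of_le_of_lt (le_trans (Finset.sum_le_sum hbound) ?_) hm
  rw [← Finset.sum_mul]
  have hsum : ∑ h ∈ histN k, (if visitsT T h then 0 else M.hprob (M.stratStar T c k) k h)
      = avoidF M T (M.stratStar T c k) k := rfl
  rw [hsum]
  have h1 : avoidF M T (M.stratStar T c k) k ≤ 1 := avoidF_le_one M _ k
  have h2 : 0 ≤ (1 - q) ^ m := pow_nonneg (by linarith) m
  calc avoidF M T (M.stratStar T c k) k * (1 - q) ^ m
      ≤ 1 * (1 - q) ^ m := mul_le_mul_of_nonneg_right h1 h2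
    _ = (1 - q) ^ m := one_mul _

end POMDP
/-- For every `k`, the strategy `σ*_k` (play the
allowed-action-restricted finite-horizon optimal strategy `σFO_k` for `k`
steps, then `σ_Allow`) is almost-sure winning for `Reach(T)`. -/
theorem stratStar_almostSure
    {S A Z : Type} [Fintype S] [Fintype A] [Fintype Z] [Nonempty A]
    (M : POMDP S A Z) (T : Set S) (c : S → A → ℝ)
    (habs : M.Absorbing T)
    (hc0 : ∀ t ∈ T, ∀ a, c t a = 0)
    (hc1 : ∀ s ∉ T, ∀ a, 1 ≤ c s a)
    (hinit : M.suppInitF ∈ M.BeliefWin T)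
    (k : ℕ) :
    M.AlmostSure T (M.stratStar T c k) := by
  exact (POMDP.almostSure_iff_wins M (M.stratStar T c k)).mpr
    (POMDP.wins_stratStar M habs c k hinit)
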